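/- arXiv:1612.02949 — 6 statements merged into one kernel-verified Lean document; each statement's English description precedes it below -/
import Mathlib

section
/- The function Ω satisfies Re Ω(z) ≥ 0 for every z ∈ D, and Im Ω(z) > 0 for every z ∈ D with Im z > 0. -/
open Complex

/-- The set `E_S = [0,∞) ∖ ⋃_{j} (a_j, b_j)` as a subset of `ℝ`. -/
def ESset (g : ℕ) (a b : Fin g → ℝ) : Set ℝ :=
  Set.Ici 0 \ ⋃ j, Set.Ioo (a j) (b j)

/-- The Denjoy domain `D = ℂ ∖ E_S`. -/
def DenjoyD (g : ℕ) (a b : Fin g → ℝ) : Set ℂ :=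
  ((fun x : ℝ => (x : ℂ)) '' ESset g a b)ᶜ


lemma L1 (y t t' : ℝ) (hy : y ≠ 0) (h : t' < t) :
    t' / Real.sqrt (t' ^ 2 + y ^ 2) < t / Real.sqrt (t ^ 2 + y ^ 2) := by
  have hy2 : (0:ℝ) < y ^ 2 := by positivity
  have hs : 0 < Real.sqrt (t ^ 2 + y ^ 2) := Real.sqrt_pos.2 (by positivity)
  have hs' : 0 < Real.sqrt (t' ^ 2 + y ^ 2) := Real.sqrt_pos.2 (by positivity)
  rw [div_lt_div_iff₀ hs' hs]
  have e : Real.sqrt (t ^ 2 + y ^ 2) ^ 2 = t ^ 2 + y ^ 2 := Real.sq_sqrt (by positivity)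
  have e' : Real.sqrt (t' ^ 2 + y ^ 2) ^ 2 = t' ^ 2 + y ^ 2 := Real.sq_sqrt (by positivity)
  rcases le_or_gt 0 t' with h0 | h0
  · have ht : 0 < t := lt_of_le_of_lt h0 h
    have hsq : (t' * Real.sqrt (t ^ 2 + y ^ 2)) ^ 2 < (t * Real.sqrt (t' ^ 2 + y ^ 2)) ^ 2 := by
      have : (t' * Real.sqrt (t ^ 2 + y ^ 2)) ^ 2 = t' ^ 2 * (t ^ 2 + y ^ 2) := by
        rw [mul_pow, e]
      rw [this]
      have : (t * Real.sqrt (t' ^ 2 + y ^ 2)) ^ 2 = t ^ 2 * (t' ^ 2 + y ^ 2) := by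
        rw [mul_pow, e']
      rw [this]
      have htt : t' ^ 2 < t ^ 2 := by nlinarith
      nlinarith [mul_pos (sub_pos.2 htt) hy2]
    have := lt_of_pow_lt_pow_left₀ 2 (by positivity) hsq
    linarith [abs_nonneg (t' * Real.sqrt (t ^ 2 + y ^ 2)),
      le_abs_self (t' * Real.sqrt (t ^ 2 + y ^ 2))]
  · rcases le_or_gt 0 t with h1 | h1
    · have h2 : t' * Real.sqrt (t ^ 2 + y ^ 2) < 0 := mul_neg_of_neg_of_pos h0 hs
      have h3 : 0 ≤ t * Real.sqrt (t' ^ 2 + y ^ 2) := mul_nonneg h1 hs'.le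
      linarith
    · have hsq : ((-t) * Real.sqrt (t' ^ 2 + y ^ 2)) ^ 2 < ((-t') * Real.sqrt (t ^ 2 + y ^ 2)) ^ 2 := by
        have e1 : ((-t) * Real.sqrt (t' ^ 2 + y ^ 2)) ^ 2 = t ^ 2 * (t' ^ 2 + y ^ 2) := by
          rw [mul_pow, e']; ring
        have e2 : ((-t') * Real.sqrt (t ^ 2 + y ^ 2)) ^ 2 = t' ^ 2 * (t ^ 2 + y ^ 2) := by
          rw [mul_pow, e]; ring
        rw [e1, e2]
        have htt : t ^ 2 < t' ^ 2 := by nlinarith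
        nlinarith [mul_pos (sub_pos.2 htt) hy2]
      have := lt_of_pow_lt_pow_left₀ 2 (mul_nonneg (by linarith) hs.le) hsq
      linarith

lemma Labs (w : ℂ) : ‖w‖ = Real.sqrt (w.re ^ 2 + w.im ^ 2) := by
  rw [Complex.norm_def, Complex.normSq_apply]; ring_nf

lemma Lmem (y t : ℝ) (hy : y ≠ 0) : t / Real.sqrt (t ^ 2 + y ^ 2) ∈ Set.Icc (-1:ℝ) 1 := by
  have hs : 0 < Real.sqrt (t ^ 2 + y ^ 2) := Real.sqrt_pos.2 (by positivity)
  have h1 : |t| ≤ Real.sqrt (t ^ 2 + y ^ 2) := by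
    rw [← Real.sqrt_sq_eq_abs]
    exact Real.sqrt_le_sqrt (by nlinarith [sq_nonneg y])
  have h2 : |t / Real.sqrt (t ^ 2 + y ^ 2)| ≤ 1 := by
    rw [abs_div, abs_of_pos hs]
    exact (div_le_one hs).2 h1
  exact abs_le.mp h2

lemma argMono (z : ℂ) (hz : 0 < z.im) (c c' : ℝ) (h : c < c') :
    Complex.arg (z - (c:ℂ)) < Complex.arg (z - (c':ℂ)) := by
  have him : ∀ d : ℝ, (z - (d:ℂ)).im = z.im := by intro d; simp
  have harg : ∀ d : ℝ, Complex.arg (z - (d:ℂ)) =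
      Real.arccos ((z.re - d) / Real.sqrt ((z.re - d) ^ 2 + z.im ^ 2)) := by
    intro d
    rw [Complex.arg_of_im_pos (by rw [him]; exact hz), Labs, him]
    simp
  rw [harg c, harg c']
  exact Real.strictAntiOn_arccos (Lmem z.im (z.re - c') hz.ne') (Lmem z.im (z.re - c) hz.ne')
    (L1 z.im (z.re - c) (z.re - c') hz.ne' (by linarith))

lemma LargIoo (z : ℂ) (hz : 0 < z.im) : 0 < Complex.arg z ∧ Complex.arg z < Real.pi := by
  constructor
  · rcases lt_or_eq_of_le (Complex.arg_nonneg_iff.2 hz.le) with h | h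
    · exact h
    · exfalso
      have := Complex.arg_eq_zero_iff.1 h.symm
      exact hz.ne' this.2
  · rcases lt_or_eq_of_le (Complex.arg_le_pi z) with h | h
    · exact h
    · exfalso
      have := Complex.arg_eq_pi_iff.1 h
      exact hz.ne' this.2

lemma Lsum (A B : ℕ → ℝ) : ∀ g, 1 ≤ g → (∀ j k, j < k → k < g → B j ≤ A k) →
    A 0 - B (g - 1) ≤ ∑ j ∈ Finset.range g, (A j - B j) := by
  intro g
  induction g with
  | zero => intro h; omega
  | succ n ih =>
    intro _ hjk
    rcases Nat.eq_or_lt_of_le (Nat.one_le_iff_ne_zero.2 (Nat.succ_ne_zero n)) with h1 | h1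
    · have hn0 : n = 0 := by omega
      subst hn0
      simp
    · have hn : 1 ≤ n := by omega
      rw [Finset.sum_range_succ]
      have h2 : A 0 - B (n - 1) ≤ ∑ j ∈ Finset.range n, (A j - B j) :=
        ih hn (fun j k hjk' hk => hjk j k hjk' (by omega))
      have h3 : B (n - 1) ≤ A n := hjk (n - 1) n (by omega) (by omega)
      have : n + 1 - 1 = n := rfl
      rw [this]
      linarith

lemma Lfactor (z : ℂ) (hz : z.im ≠ 0) (p q : ℝ) :
    (z - (p:ℂ)) / (z - (q:ℂ)) =
      ((‖z - (p:ℂ)‖ / ‖z - (q:ℂ)‖ : ℝ) : ℂ) *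
        Complex.exp ((↑(Complex.arg (z - (p:ℂ)) - Complex.arg (z - (q:ℂ)))) * I) := by
  have hp : z - (p:ℂ) ≠ 0 := by
    intro h
    apply hz
    have := congrArg Complex.im h
    simpa using this
  have hq : z - (q:ℂ) ≠ 0 := by
    intro h
    apply hz
    have := congrArg Complex.im h
    simpa using this
  have hap : (‖z - (p:ℂ)‖ : ℂ) ≠ 0 := by
    simpa using (norm_ne_zero_iff.mpr hp)
  have haq : (‖z - (q:ℂ)‖ : ℂ) ≠ 0 := by
    simpa using (norm_ne_zero_iff.mpr hq)
  have he : Complex.exp ((↑(Complex.arg (z - (q:ℂ)))) * I) ≠ 0 := Complex.exp_ne_zero _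
  conv_lhs => rw [← Complex.norm_mul_exp_arg_mul_I (z - (p:ℂ)),
    ← Complex.norm_mul_exp_arg_mul_I (z - (q:ℂ))]
  rw [Complex.ofReal_sub, sub_mul, Complex.exp_sub, Complex.ofReal_div]
  field_simp

lemma Lneg (z : ℂ) (hz : z ≠ 0) :
    -(1 / z) = (((‖z‖)⁻¹ : ℝ) : ℂ) *
      Complex.exp ((↑(Real.pi - Complex.arg z)) * I) := by
  have ha : (‖z‖ : ℂ) ≠ 0 := by simpa using norm_ne_zero_iff.mpr hz
  have he : Complex.exp ((↑(Complex.arg z)) * I) ≠ 0 := Complex.exp_ne_zero _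
  conv_lhs => rw [← Complex.norm_mul_exp_arg_mul_I z]
  rw [Complex.ofReal_sub, sub_mul, Complex.exp_sub, Complex.exp_pi_mul_I, Complex.ofReal_inv]
  field_simp

lemma Lprod (g : ℕ) (a b : Fin g → ℝ) (z : ℂ) (hz : z.im ≠ 0) :
    (∏ j, (z - (a j : ℂ)) / (z - (b j : ℂ))) =
      ((∏ j, ‖z - (a j : ℂ)‖ / ‖z - (b j : ℂ)‖ : ℝ) : ℂ) *
        Complex.exp ((↑(∑ j, (Complex.arg (z - (a j : ℂ)) - Complex.arg (z - (b j : ℂ))))) * I) := by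
  have : ∀ j : Fin g, (z - (a j : ℂ)) / (z - (b j : ℂ)) =
      ((‖z - (a j : ℂ)‖ / ‖z - (b j : ℂ)‖ : ℝ) : ℂ) *
        Complex.exp ((↑(Complex.arg (z - (a j : ℂ)) - Complex.arg (z - (b j : ℂ)))) * I) :=
    fun j => Lfactor z hz (a j) (b j)
  rw [Finset.prod_congr rfl (fun j _ => this j), Finset.prod_mul_distrib]
  rw [← Complex.exp_sum]
  push_cast
  rw [Finset.sum_mul]

lemma LImF (g : ℕ) (hg : 1 ≤ g) (a b : Fin g → ℝ)
    (hpos : ∀ j, 0 < a j) (hab : ∀ j, a j < b j)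
    (hord : ∀ j k : Fin g, j < k → b j < a k)
    (z : ℂ) (hz : 0 < z.im) :
    0 < (-(1 / z) * ∏ j, (z - (a j : ℂ)) / (z - (b j : ℂ))).im := by
  have hzne : z ≠ 0 := by
    intro h; rw [h] at hz; simp at hz
  have hzim : z.im ≠ 0 := hz.ne'
  set θ : ℝ → ℝ := fun c => Complex.arg (z - (c:ℂ)) with hθ
  have himc : ∀ c : ℝ, 0 < (z - (c:ℂ)).im := by intro c; simpa using hz
  have hIoo : ∀ c : ℝ, 0 < θ c ∧ θ c < Real.pi := fun c => LargIoo _ (himc c)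
  have hwne : ∀ c : ℝ, z - (c:ℂ) ≠ 0 := by
    intro c h
    have := congrArg Complex.im h
    simp at this
    exact hzim this
  -- the representation
  set S : ℝ := ∑ j, (θ (a j) - θ (b j)) with hS
  set R : ℝ := (‖z‖)⁻¹ * ∏ j, ‖z - (a j : ℂ)‖ / ‖z - (b j : ℂ)‖ with hR
  set φ : ℝ := Real.pi - Complex.arg z + S with hφ
  have hrep : -(1 / z) * ∏ j, (z - (a j : ℂ)) / (z - (b j : ℂ)) =
      (R : ℂ) * Complex.exp ((φ : ℝ) * I) := by
    rw [Lneg z hzne, Lprod g a b z hzim, hR, hφ, hS]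
    simp only [hθ]
    push_cast
    rw [add_mul, Complex.exp_add]
    ring
  have hR0 : 0 < R := by
    apply mul_pos
    · exact inv_pos.2 (norm_pos_iff.mpr hzne)
    · exact Finset.prod_pos fun j _ => div_pos (norm_pos_iff.mpr (hwne (a j))) (norm_pos_iff.mpr (hwne (b j)))
  -- arg z bounds
  have hargz : 0 < Complex.arg z ∧ Complex.arg z < Real.pi := LargIoo z hz
  have hargz0 : Complex.arg z = θ 0 := by
    rw [hθ]; simp
  -- upper bound on S
  have hSle : S ≤ 0 := by
    apply Finset.sum_nonpos
    intro j _
    have := argMono z hz (a j) (b j) (hab j)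
    simp only [hθ]
    linarith
  -- lower bound on S
  have hSlb : Real.pi - Complex.arg z + S > 0 := by
    have hgpos : 0 < g := hg
    set A' : ℕ → ℝ := fun j => θ (a ⟨j % g, Nat.mod_lt j hgpos⟩) with hA'
    set B' : ℕ → ℝ := fun j => θ (b ⟨j % g, Nat.mod_lt j hgpos⟩) with hB'
    have hSeq : S = ∑ j ∈ Finset.range g, (A' j - B' j) := by
      rw [hS, ← Fin.sum_univ_eq_sum_range (fun j => A' j - B' j) g]
      apply Finset.sum_congr rfl
      intro i _
      have : (⟨i.val % g, Nat.mod_lt i.val hgpos⟩ : Fin g) = i := by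
        ext; simp [Nat.mod_eq_of_lt i.isLt]
      rw [hA', hB']
      simp only [this]
    have hkey : A' 0 - B' (g - 1) ≤ ∑ j ∈ Finset.range g, (A' j - B' j) := by
      apply Lsum A' B' g hg
      intro j k hjk hk
      have hj : j < g := lt_trans hjk hk
      have hbj : (⟨j % g, Nat.mod_lt j hgpos⟩ : Fin g) < (⟨k % g, Nat.mod_lt k hgpos⟩ : Fin g) := by
        simp [Fin.lt_def, Nat.mod_eq_of_lt hj, Nat.mod_eq_of_lt hk, hjk]
      have := hord _ _ hbj
      exact le_of_lt (argMono z hz _ _ this)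
    have hA0 : Complex.arg z < A' 0 := by
      rw [hargz0, hA']
      exact argMono z hz 0 _ (by simpa using hpos _)
    have hBg : B' (g - 1) < Real.pi := (hIoo _).2
    rw [hSeq]
    linarith
  have hφ0 : 0 < φ := by rw [hφ]; linarith
  have hφπ : φ < Real.pi := by rw [hφ]; linarith [hargz.1]
  rw [hrep]
  have : ((R : ℂ) * Complex.exp ((φ : ℝ) * I)).im = R * Real.sin φ := by
    rw [Complex.mul_im]
    simp [Complex.exp_ofReal_mul_I_im, Complex.exp_ofReal_mul_I_re]
  rw [this]
  exact mul_pos hR0 (Real.sin_pos_of_pos_of_lt_pi hφ0 hφπ)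

lemma LconjF (g : ℕ) (a b : Fin g → ℝ) (z : ℂ) :
    -(1 / (starRingEnd ℂ z)) * ∏ j, ((starRingEnd ℂ z) - (a j : ℂ)) / ((starRingEnd ℂ z) - (b j : ℂ)) =
      starRingEnd ℂ (-(1 / z) * ∏ j, (z - (a j : ℂ)) / (z - (b j : ℂ))) := by
  rw [map_mul, map_neg, map_div₀, map_one, map_prod]
  congr 1
  apply Finset.prod_congr rfl
  intro j _
  rw [map_div₀, map_sub, map_sub, Complex.conj_ofReal, Complex.conj_ofReal]

lemma LImFneg (g : ℕ) (hg : 1 ≤ g) (a b : Fin g → ℝ)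
    (hpos : ∀ j, 0 < a j) (hab : ∀ j, a j < b j)
    (hord : ∀ j k : Fin g, j < k → b j < a k)
    (z : ℂ) (hz : z.im < 0) :
    (-(1 / z) * ∏ j, (z - (a j : ℂ)) / (z - (b j : ℂ))).im < 0 := by
  have hw : 0 < (starRingEnd ℂ z).im := by
    rw [Complex.conj_im]; linarith
  have h := LImF g hg a b hpos hab hord (starRingEnd ℂ z) hw
  rw [LconjF g a b z, Complex.conj_im] at h
  linarith

open Filter Topology in
theorem stmt5' (g : ℕ) (hg : 1 ≤ g) (a b : Fin g → ℝ)
    (hpos : ∀ j, 0 < a j) (hab : ∀ j, a j < b j)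
    (hord : ∀ j k : Fin g, j < k → b j < a k)
    (Ω : ℂ → ℂ)
    (hΩd : DifferentiableOn ℂ Ω (((fun x : ℝ => (x : ℂ)) '' (Set.Ici 0 \ ⋃ j, Set.Ioo (a j) (b j)))ᶜ))
    (hΩsq : ∀ z ∈ (((fun x : ℝ => (x : ℂ)) '' (Set.Ici 0 \ ⋃ j, Set.Ioo (a j) (b j)))ᶜ),
      (Ω z) ^ 2 = -(1 / z) * ∏ j, (z - (a j : ℂ)) / (z - (b j : ℂ)))
    (hΩpos : ∀ x : ℝ, x < 0 → ∃ r : ℝ, 0 < r ∧ Ω (x : ℂ) = r) :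
    (∀ z ∈ (((fun x : ℝ => (x : ℂ)) '' (Set.Ici 0 \ ⋃ j, Set.Ioo (a j) (b j)))ᶜ), 0 ≤ (Ω z).re) ∧
    (∀ z ∈ (((fun x : ℝ => (x : ℂ)) '' (Set.Ici 0 \ ⋃ j, Set.Ioo (a j) (b j)))ᶜ), 0 < z.im → 0 < (Ω z).im) := by
  classical
  set D : Set ℂ := ((fun x : ℝ => (x : ℂ)) '' (Set.Ici 0 \ ⋃ j, Set.Ioo (a j) (b j)))ᶜ with hD
  have hmemD : ∀ z : ℂ, z.im ≠ 0 → z ∈ D := by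
    intro z hz
    simp only [hD, Set.mem_compl_iff, Set.mem_image, not_exists]
    rintro x ⟨hx, hxz⟩
    apply hz
    rw [← hxz]
    simp
  have hmemneg : ∀ x : ℝ, x < 0 → (x : ℂ) ∈ D := by
    intro x hx
    simp only [hD, Set.mem_compl_iff, Set.mem_image, not_exists]
    rintro y ⟨hy, hyx⟩
    have hyx' : y = x := by exact_mod_cast hyx
    subst hyx'
    exact absurd hy.1 (not_le.2 hx)
  have hDopen : IsOpen D := by
    rw [hD]
    apply isOpen_compl_iff.2
    apply Complex.isUniformEmbedding_ofReal.isClosedEmbedding.isClosedMap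
    rw [Set.diff_eq]
    exact isClosed_Ici.inter (isOpen_iUnion fun j => isOpen_Ioo).isClosed_compl
  have hcont : ContinuousOn Ω D := hΩd.continuousOn
  -- upper half plane
  have key_upper : ∀ z : ℂ, 0 < z.im → 0 < (Ω z).re ∧ 0 < (Ω z).im := by
    set U : Set ℂ := D ∩ Ω ⁻¹' {w : ℂ | 0 < w.re ∧ 0 < w.im} with hU
    set V : Set ℂ := D ∩ Ω ⁻¹' {w : ℂ | w.re < 0 ∧ w.im < 0} with hV
    have hUopen : IsOpen U := hcont.isOpen_inter_preimage hDopen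
      ((isOpen_lt continuous_const Complex.continuous_re).inter
        (isOpen_lt continuous_const Complex.continuous_im))
    have hVopen : IsOpen V := hcont.isOpen_inter_preimage hDopen
      ((isOpen_lt Complex.continuous_re continuous_const).inter
        (isOpen_lt Complex.continuous_im continuous_const))
    have hsub : {z : ℂ | 0 < z.im} ⊆ U ∪ V := by
      intro z hz
      have hzD : z ∈ D := hmemD z (ne_of_gt hz)
      have hsq := hΩsq z hzD
      have him := LImF g hg a b hpos hab hord z hz
      rw [← hsq] at him
      have h2 : 0 < (Ω z).re * (Ω z).im := by
        have he : (Ω z ^ 2).im = (Ω z).re * (Ω z).im + (Ω z).im * (Ω z).re := by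
          rw [sq, Complex.mul_im]
        rw [he] at him; linarith
      rcases mul_pos_iff.1 h2 with ⟨h3, h4⟩ | ⟨h3, h4⟩
      · exact Or.inl ⟨hzD, h3, h4⟩
      · exact Or.inr ⟨hzD, h3, h4⟩
    obtain ⟨r, hr, hΩr⟩ := hΩpos (-1) (by norm_num)
    have hm1D : ((-1 : ℝ) : ℂ) ∈ D := hmemneg (-1) (by norm_num)
    have hpath : Tendsto (fun t : ℝ => ((-1 : ℝ) : ℂ) + t * I) (𝓝[>] 0)
        (𝓝[D] (((-1 : ℝ) : ℂ))) := by
      apply tendsto_nhdsWithin_of_tendsto_nhds_of_eventually_within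
      · have hc : Continuous (fun t : ℝ => ((-1 : ℝ) : ℂ) + t * I) := continuous_const.add (Complex.continuous_ofReal.mul continuous_const)
        have h0 : Tendsto (fun t : ℝ => ((-1 : ℝ) : ℂ) + ↑t * I) (𝓝 0) (𝓝 (((-1:ℝ):ℂ))) := by
          have h1 := hc.tendsto 0
          simpa using h1
        exact h0.mono_left nhdsWithin_le_nhds
      · filter_upwards [self_mem_nhdsWithin] with t ht
        apply hmemD
        simp only [Complex.add_im, Complex.mul_im, Complex.ofReal_im, Complex.ofReal_re,
          Complex.I_im, Complex.I_re]
        simpa using ne_of_gt ht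
    have htend : Tendsto (fun t : ℝ => Ω (((-1:ℝ):ℂ) + t * I)) (𝓝[>] 0) (𝓝 (Ω ((-1:ℝ):ℂ))) :=
      ((hcont _ hm1D).tendsto).comp hpath
    have htre : Tendsto (fun t : ℝ => (Ω (((-1:ℝ):ℂ) + t * I)).re) (𝓝[>] 0) (𝓝 r) := by
      have h2 := (Complex.continuous_re.tendsto _).comp htend
      rw [hΩr] at h2
      simpa [Function.comp_def] using h2
    have hev : ∀ᶠ (t : ℝ) in 𝓝[>] (0:ℝ), 0 < (Ω (((-1:ℝ):ℂ) + (t:ℂ) * I)).re :=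
      htre.eventually (eventually_gt_nhds hr)
    have hev2 : ∀ᶠ (t : ℝ) in 𝓝[>] (0:ℝ), (((-1:ℝ):ℂ) + (t:ℂ) * I) ∈ {z : ℂ | 0 < z.im} := by
      filter_upwards [self_mem_nhdsWithin] with t ht
      simp only [Set.mem_setOf_eq, Complex.add_im, Complex.mul_im, Complex.ofReal_im,
        Complex.ofReal_re, Complex.I_im, Complex.I_re]
      simpa using ht
    obtain ⟨t, ht1, ht2⟩ := (hev.and hev2).exists
    have hz0 : (((-1:ℝ):ℂ) + t * I) ∈ U := by
      rcases hsub ht2 with h | h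
      · exact h
      · exact absurd h.2.1 (not_lt.2 ht1.le)
    intro z hz
    rcases hsub hz with h | h
    · exact ⟨h.2.1, h.2.2⟩
    · exfalso
      have hpc : IsPreconnected {z : ℂ | 0 < z.im} := (convex_halfSpace_im_gt 0).isPreconnected
      obtain ⟨w, hws, hwU, hwV⟩ := hpc U V hUopen hVopen hsub ⟨_, ht2, hz0⟩ ⟨z, hz, h⟩
      exact absurd hwU.2.1 (not_lt.2 hwV.2.1.le)
  -- lower half plane
  have key_lower : ∀ z : ℂ, z.im < 0 → 0 < (Ω z).re := by
    set U : Set ℂ := D ∩ Ω ⁻¹' {w : ℂ | 0 < w.re ∧ w.im < 0} with hU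
    set V : Set ℂ := D ∩ Ω ⁻¹' {w : ℂ | w.re < 0 ∧ 0 < w.im} with hV
    have hUopen : IsOpen U := hcont.isOpen_inter_preimage hDopen
      ((isOpen_lt continuous_const Complex.continuous_re).inter
        (isOpen_lt Complex.continuous_im continuous_const))
    have hVopen : IsOpen V := hcont.isOpen_inter_preimage hDopen
      ((isOpen_lt Complex.continuous_re continuous_const).inter
        (isOpen_lt continuous_const Complex.continuous_im))
    have hsub : {z : ℂ | z.im < 0} ⊆ U ∪ V := by
      intro z hz
      have hzD : z ∈ D := hmemD z (ne_of_lt hz)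
      have hsq := hΩsq z hzD
      have him := LImFneg g hg a b hpos hab hord z hz
      rw [← hsq] at him
      have h2 : (Ω z).re * (Ω z).im < 0 := by
        have he : (Ω z ^ 2).im = (Ω z).re * (Ω z).im + (Ω z).im * (Ω z).re := by
          rw [sq, Complex.mul_im]
        rw [he] at him; linarith
      rcases mul_neg_iff.1 h2 with ⟨h3, h4⟩ | ⟨h3, h4⟩
      · exact Or.inl ⟨hzD, h3, h4⟩
      · exact Or.inr ⟨hzD, h3, h4⟩
    obtain ⟨r, hr, hΩr⟩ := hΩpos (-1) (by norm_num)
    have hm1D : ((-1 : ℝ) : ℂ) ∈ D := hmemneg (-1) (by norm_num)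
    have hpath : Tendsto (fun t : ℝ => ((-1 : ℝ) : ℂ) + t * I) (𝓝[<] 0)
        (𝓝[D] (((-1 : ℝ) : ℂ))) := by
      apply tendsto_nhdsWithin_of_tendsto_nhds_of_eventually_within
      · have hc : Continuous (fun t : ℝ => ((-1 : ℝ) : ℂ) + t * I) := continuous_const.add (Complex.continuous_ofReal.mul continuous_const)
        have h0 : Tendsto (fun t : ℝ => ((-1 : ℝ) : ℂ) + ↑t * I) (𝓝 0) (𝓝 (((-1:ℝ):ℂ))) := by
          have h1 := hc.tendsto 0
          simpa using h1
        exact h0.mono_left nhdsWithin_le_nhds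
      · filter_upwards [self_mem_nhdsWithin] with t ht
        apply hmemD
        simp only [Complex.add_im, Complex.mul_im, Complex.ofReal_im, Complex.ofReal_re,
          Complex.I_im, Complex.I_re]
        simpa using ne_of_lt ht
    have htend : Tendsto (fun t : ℝ => Ω (((-1:ℝ):ℂ) + t * I)) (𝓝[<] 0) (𝓝 (Ω ((-1:ℝ):ℂ))) :=
      ((hcont _ hm1D).tendsto).comp hpath
    have htre : Tendsto (fun t : ℝ => (Ω (((-1:ℝ):ℂ) + t * I)).re) (𝓝[<] 0) (𝓝 r) := by
      have h2 := (Complex.continuous_re.tendsto _).comp htend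
      rw [hΩr] at h2
      simpa [Function.comp_def] using h2
    have hev : ∀ᶠ (t : ℝ) in 𝓝[<] (0:ℝ), 0 < (Ω (((-1:ℝ):ℂ) + (t:ℂ) * I)).re :=
      htre.eventually (eventually_gt_nhds hr)
    have hev2 : ∀ᶠ (t : ℝ) in 𝓝[<] (0:ℝ), (((-1:ℝ):ℂ) + (t:ℂ) * I) ∈ {z : ℂ | z.im < 0} := by
      filter_upwards [self_mem_nhdsWithin] with t ht
      simp only [Set.mem_setOf_eq, Complex.add_im, Complex.mul_im, Complex.ofReal_im,
        Complex.ofReal_re, Complex.I_im, Complex.I_re]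
      simpa using ht
    obtain ⟨t, ht1, ht2⟩ := (hev.and hev2).exists
    have hz0 : (((-1:ℝ):ℂ) + t * I) ∈ U := by
      rcases hsub ht2 with h | h
      · exact h
      · exact absurd h.2.1 (not_lt.2 ht1.le)
    intro z hz
    rcases hsub hz with h | h
    · exact h.2.1
    · exfalso
      have hpc : IsPreconnected {z : ℂ | z.im < 0} := (convex_halfSpace_im_lt 0).isPreconnected
      obtain ⟨w, hws, hwU, hwV⟩ := hpc U V hUopen hVopen hsub ⟨_, ht2, hz0⟩ ⟨z, hz, h⟩
      exact absurd hwU.2.1 (not_lt.2 hwV.2.1.le)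
  constructor
  · intro z hzD
    rcases lt_trichotomy z.im 0 with h | h | h
    · exact (key_lower z h).le
    · -- boundary case
      have hpath : Tendsto (fun t : ℝ => z + t * I) (𝓝[>] 0) (𝓝[D] z) := by
        apply tendsto_nhdsWithin_of_tendsto_nhds_of_eventually_within
        · have hc : Continuous (fun t : ℝ => z + t * I) := continuous_const.add (Complex.continuous_ofReal.mul continuous_const)
          have h0 : Tendsto (fun t : ℝ => z + ↑t * I) (𝓝 0) (𝓝 z) := by
            have h1 := hc.tendsto 0
            simpa using h1
          exact h0.mono_left nhdsWithin_le_nhds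
        · filter_upwards [self_mem_nhdsWithin] with t ht
          apply hmemD
          simp only [Complex.add_im, Complex.mul_im, Complex.ofReal_im, Complex.ofReal_re,
            Complex.I_im, Complex.I_re, h]
          simpa using ne_of_gt ht
      have htend : Tendsto (fun t : ℝ => Ω (z + t * I)) (𝓝[>] 0) (𝓝 (Ω z)) :=
        ((hcont _ hzD).tendsto).comp hpath
      have htre : Tendsto (fun t : ℝ => (Ω (z + t * I)).re) (𝓝[>] 0) (𝓝 ((Ω z).re)) :=
        (Complex.continuous_re.tendsto _).comp htend
      apply ge_of_tendsto htre
      filter_upwards [self_mem_nhdsWithin] with t ht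
      have him : 0 < (z + t * I).im := by
        simp only [Complex.add_im, Complex.mul_im, Complex.ofReal_im, Complex.ofReal_re,
          Complex.I_im, Complex.I_re, h]
        simpa using ht
      exact (key_upper _ him).1.le
    · exact (key_upper z h).1.le
  · intro z _ hz
    exact (key_upper z hz).2

/-- The branch `Ω` of `√(−(1/z)·∏ (z−a_j)/(z−b_j))` positive on `(−∞,0)` satisfies
`Re Ω(z) ≥ 0` on all of `D`, and `Im Ω(z) > 0` for `z ∈ D` with `Im z > 0`. -/
theorem stmt5 (g : ℕ) (hg : 1 ≤ g) (a b : Fin g → ℝ)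
    (hpos : ∀ j, 0 < a j) (hab : ∀ j, a j < b j)
    (hord : ∀ j k : Fin g, j < k → b j < a k)
    (Ω : ℂ → ℂ)
    (hΩd : DifferentiableOn ℂ Ω (DenjoyD g a b))
    (hΩsq : ∀ z ∈ DenjoyD g a b,
      (Ω z) ^ 2 = -(1 / z) * ∏ j, (z - (a j : ℂ)) / (z - (b j : ℂ)))
    (hΩpos : ∀ x : ℝ, x < 0 → ∃ r : ℝ, 0 < r ∧ Ω (x : ℂ) = r) :
    (∀ z ∈ DenjoyD g a b, 0 ≤ (Ω z).re) ∧
    (∀ z ∈ DenjoyD g a b, 0 < z.im → 0 < (Ω z).im) := by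
  exact stmt5' g hg a b hpos hab hord Ω hΩd hΩsq hΩpos
end

section
/- Let Γ be a countable subgroup of SL(2,ℝ) with −I ∉ Γ, acting on ℝ by Möbius transformations γ·ξ = (γ₁₁ξ + γ₁₂)/(γ₂₁ξ + γ₂₂) (defined off countably many points). Assume there is a Lebesgue-measurable set 𝔼 ⊆ ℝ such that the sets γ·𝔼, γ ∈ Γ, pairwise intersect in Lebesgue-null sets and ℝ ∖ ⋃_{γ∈Γ} γ·𝔼 is Lebesgue-null. Assume further there is a Lebesgue-integrable function f : ℝ → ℝ such that f(ξ) > 0 for almost every ξ ∈ ℝ and, for each γ ∈ Γ, f(γ·ξ) = f(ξ) for almost every ξ. Then for almost every ξ ∈ ℝ the series ∑_{γ∈Γ} 1/(γ₂₁ξ + γ₂₂)² converges (is finite). -/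
open MeasureTheory

/-- The Möbius action of `γ ∈ SL(2,ℝ)` on `ℝ`: `γ·ξ = (γ₁₁ξ + γ₁₂)/(γ₂₁ξ + γ₂₂)`. -/
noncomputable def moebius (γ : Matrix.SpecialLinearGroup (Fin 2) ℝ) (ξ : ℝ) : ℝ :=
  (γ.1 0 0 * ξ + γ.1 0 1) / (γ.1 1 0 * ξ + γ.1 1 1)

namespace Stmt6Aux

abbrev SL2 := Matrix.SpecialLinearGroup (Fin 2) ℝ

def dnm (γ : SL2) (ξ : ℝ) : ℝ := γ.1 1 0 * ξ + γ.1 1 1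

lemma det_eq (γ : SL2) : γ.1 0 0 * γ.1 1 1 - γ.1 0 1 * γ.1 1 0 = 1 := by
  have h := γ.2
  rwa [Matrix.det_fin_two] at h

lemma dnm_continuous (γ : SL2) : Continuous (dnm γ) := by
  unfold dnm; continuity

lemma pole_subsingleton (γ : SL2) : Set.Subsingleton {ξ : ℝ | dnm γ ξ = 0} := by
  intro x hx y hy
  simp only [Set.mem_setOf_eq, dnm] at hx hy
  by_cases hc : γ.1 1 0 = 0
  · exfalso
    have hd : γ.1 1 1 ≠ 0 := by
      intro hd
      have := det_eq γ
      rw [hc, hd] at this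
      simp at this
    rw [hc] at hx; simpa [hd] using hx
  · have : γ.1 1 0 * (x - y) = 0 := by linarith
    rcases mul_eq_zero.1 this with h | h
    · exact absurd h hc
    · linarith

lemma pole_null (γ : SL2) : volume {ξ : ℝ | dnm γ ξ = 0} = 0 :=
  (pole_subsingleton γ).measure_zero _

lemma pole_measurable (γ : SL2) : MeasurableSet {ξ : ℝ | dnm γ ξ = 0} :=
  (isClosed_eq (dnm_continuous γ) continuous_const).measurableSet

lemma hasDerivAt_moebius (γ : SL2) {ξ : ℝ} (hξ : dnm γ ξ ≠ 0) :
    HasDerivAt (moebius γ) (1 / (dnm γ ξ) ^ 2) ξ := by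
  have h1 : HasDerivAt (fun ξ : ℝ => γ.1 0 0 * ξ + γ.1 0 1) (γ.1 0 0) ξ := by
    simpa using ((hasDerivAt_id ξ).const_mul (γ.1 0 0)).add_const (γ.1 0 1)
  have h2 : HasDerivAt (fun ξ : ℝ => γ.1 1 0 * ξ + γ.1 1 1) (γ.1 1 0) ξ := by
    simpa using ((hasDerivAt_id ξ).const_mul (γ.1 1 0)).add_const (γ.1 1 1)
  have := h1.div h2 hξ
  have hnum : γ.1 0 0 * (γ.1 1 0 * ξ + γ.1 1 1) - (γ.1 0 0 * ξ + γ.1 0 1) * γ.1 1 0 = 1 := by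
    linear_combination det_eq γ
  rw [hnum] at this
  exact this

lemma injOn_moebius (γ : SL2) : Set.InjOn (moebius γ) {ξ : ℝ | dnm γ ξ ≠ 0} := by
  intro x hx y hy hxy
  simp only [Set.mem_setOf_eq, dnm] at hx hy
  unfold moebius at hxy
  rw [div_eq_div_iff hx hy] at hxy
  have hd := det_eq γ
  linear_combination hxy - (x - y) * hd

lemma cocycle (γ η : SL2) {ξ : ℝ} (hξ : dnm η ξ ≠ 0) :
    dnm (γ * η) ξ = dnm γ (moebius η ξ) * dnm η ξ := by
  have hmul : (γ * η).1 = γ.1 * η.1 := rfl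
  simp only [dnm, moebius, hmul, Matrix.mul_apply, Fin.sum_univ_two]
  unfold dnm at hξ
  field_simp [dnm] at *
  ring

/-- one-dimensional change of variables for `moebius`. -/
lemma lint_image (γ : SL2) {s : Set ℝ} (hm : MeasurableSet s)
    (hs : ∀ ξ ∈ s, dnm γ ξ ≠ 0) (g : ℝ → ENNReal) :
    ∫⁻ x in moebius γ '' s, g x
      = ∫⁻ x in s, ENNReal.ofReal (1 / (dnm γ x) ^ 2) * g (moebius γ x) := by
  have h := lintegral_image_eq_lintegral_abs_det_fderiv_mul volume hm
    (f' := fun x => ContinuousLinearMap.smulRight (1 : ℝ →L[ℝ] ℝ) (1 / (dnm γ x) ^ 2))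
    (fun x hx => ((hasDerivAt_moebius γ (hs x hx)).hasDerivWithinAt).hasFDerivWithinAt)
    ((injOn_moebius γ).mono hs) g
  rw [h]
  refine setLIntegral_congr_fun hm (fun x hx => ?_)
  erw [ContinuousLinearMap.det_toSpanSingleton, abs_of_nonneg (by positivity)]

lemma image_null (γ : SL2) {s : Set ℝ} (h0 : volume s = 0) :
    volume (moebius γ '' s) = 0 := by
  have hsplit : moebius γ '' s ⊆
      moebius γ '' (s ∩ {ξ | dnm γ ξ ≠ 0}) ∪ moebius γ '' {ξ | dnm γ ξ = 0} := by
    rintro _ ⟨x, hx, rfl⟩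
    by_cases h : dnm γ x = 0
    · exact Or.inr ⟨x, h, rfl⟩
    · exact Or.inl ⟨x, ⟨hx, h⟩, rfl⟩
  refine measure_mono_null hsplit (measure_union_null ?_ ?_)
  · set t := toMeasurable volume s ∩ {ξ : ℝ | dnm γ ξ ≠ 0} with ht
    have htm : MeasurableSet t :=
      (measurableSet_toMeasurable _ _).inter (pole_measurable γ).compl
    have ht0 : volume t = 0 :=
      measure_mono_null Set.inter_subset_left (by rwa [measure_toMeasurable])
    have hsub : moebius γ '' (s ∩ {ξ | dnm γ ξ ≠ 0}) ⊆ moebius γ '' t :=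
      Set.image_mono (Set.inter_subset_inter_left _ (subset_toMeasurable _ _))
    refine measure_mono_null hsub ?_
    have := lint_image γ htm (fun ξ hξ => hξ.2) (fun _ => 1)
    rw [setLIntegral_one] at this
    rw [this, Measure.restrict_eq_zero.2 ht0, lintegral_zero_measure]
  · exact ((pole_subsingleton γ).image _).measure_zero _

end Stmt6Aux

open Stmt6Aux

/-- If a countable subgroup `Γ ⊆ SL(2,ℝ)` with `−I ∉ Γ` admits a measurable fundamental set
`𝔼 ⊆ ℝ` for its Möbius action on `ℝ` and a positive integrable a.e.-invariant function, then
the series `∑_{γ∈Γ} 1/(γ₂₁ξ + γ₂₂)²` converges for almost every `ξ ∈ ℝ`. -/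
theorem stmt6 (Γ : Subgroup (Matrix.SpecialLinearGroup (Fin 2) ℝ))
    (hcount : Countable Γ)
    (hnegI : ∀ γ ∈ Γ, (γ : Matrix.SpecialLinearGroup (Fin 2) ℝ).1 ≠
      -(1 : Matrix (Fin 2) (Fin 2) ℝ))
    (𝔼 : Set ℝ) (h𝔼 : MeasurableSet 𝔼)
    (hdisj : ∀ γ ∈ Γ, ∀ γ' ∈ Γ, γ ≠ γ' →
      volume (moebius γ '' 𝔼 ∩ moebius γ' '' 𝔼) = 0)
    (hcover : volume ((Set.univ : Set ℝ) \ ⋃ γ ∈ Γ, moebius γ '' 𝔼) = 0)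
    (f : ℝ → ℝ) (hf : Integrable f)
    (hfpos : ∀ᵐ ξ : ℝ, 0 < f ξ)
    (hfinv : ∀ γ ∈ Γ, ∀ᵐ ξ : ℝ, f (moebius γ ξ) = f ξ) :
    ∀ᵐ ξ : ℝ, Summable (fun γ : Γ =>
      1 / ((γ : Matrix.SpecialLinearGroup (Fin 2) ℝ).1 1 0 * ξ +
            (γ : Matrix.SpecialLinearGroup (Fin 2) ℝ).1 1 1) ^ 2) := by
  haveI := hcount
  classical
  set P : Set ℝ := ⋃ γ : Γ, {ξ : ℝ | dnm γ.1 ξ = 0} with hP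
  have hPm : MeasurableSet P := MeasurableSet.iUnion fun γ => pole_measurable _
  have hP0 : volume P = 0 := measure_iUnion_null fun γ => pole_null _
  have hnP : ∀ ξ : ℝ, ξ ∉ P → ∀ γ : Γ, dnm γ.1 ξ ≠ 0 := by
    intro ξ hξ γ h
    exact hξ (Set.mem_iUnion.2 ⟨γ, h⟩)
  set E' : Set ℝ := 𝔼 \ P with hE'def
  have hE'm : MeasurableSet E' := h𝔼.diff hPm
  have hE'd : ∀ γ : Γ, ∀ ξ ∈ E', dnm γ.1 ξ ≠ 0 := fun γ ξ hξ => hnP ξ hξ.2 γ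
  set g : ℝ → ENNReal := fun ξ => ENNReal.ofReal (f ξ) with hg
  have hgm : AEMeasurable g := hf.aemeasurable.ennreal_ofReal
  set w : Γ → ℝ → ENNReal := fun γ ξ => ENNReal.ofReal (1 / (dnm γ.1 ξ) ^ 2) with hw
  have hwm : ∀ γ : Γ, Measurable (w γ) := by
    intro γ
    apply Measurable.ennreal_ofReal
    simpa [one_div] using ((dnm_continuous γ.1).measurable.pow_const 2)
  have hstep : ∀ γ : Γ, ∫⁻ ξ in E', w γ ξ * g ξ = ∫⁻ x in moebius γ.1 '' E', g x := by
    intro γ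
    rw [lint_image γ.1 hE'm (hE'd γ) g]
    refine lintegral_congr_ae ?_
    have h1 : ∀ᵐ ξ ∂(volume.restrict E'), f (moebius γ.1 ξ) = f ξ :=
      ae_restrict_of_ae (hfinv γ.1 γ.2)
    filter_upwards [h1] with ξ hξ
    rw [hw, hg]; dsimp only; rw [hξ]
  have hAdisj : Pairwise (Function.onFun (MeasureTheory.AEDisjoint volume) fun γ : Γ => moebius γ.1 '' E') := by
    intro γ γ' hne
    refine measure_mono_null (Set.inter_subset_inter
      (Set.image_mono Set.diff_subset) (Set.image_mono Set.diff_subset)) ?_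
    exact hdisj γ.1 γ.2 γ'.1 γ'.2 (fun h => hne (Subtype.ext h))
  have hAm : ∀ γ : Γ, MeasurableSet (moebius γ.1 '' E') := by
    intro γ
    refine hE'm.image_of_continuousOn_injOn ?_ ((injOn_moebius γ.1).mono (hE'd γ))
    intro ξ hξ
    exact ((hasDerivAt_moebius γ.1 (hE'd γ ξ hξ)).continuousAt).continuousWithinAt
  have hsum_le : ∑' γ : Γ, ∫⁻ ξ in E', w γ ξ * g ξ ≤ ∫⁻ ξ, g ξ := by
    calc ∑' γ : Γ, ∫⁻ ξ in E', w γ ξ * g ξ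
        = ∑' γ : Γ, ∫⁻ x in moebius γ.1 '' E', g x := tsum_congr hstep
      _ = ∫⁻ x in ⋃ γ : Γ, moebius γ.1 '' E', g x :=
          (lintegral_iUnion₀ (fun γ => (hAm γ).nullMeasurableSet) hAdisj g).symm
      _ ≤ ∫⁻ ξ, g ξ := setLIntegral_le_lintegral _ _
  have hfin : ∫⁻ ξ in E', (∑' γ : Γ, w γ ξ) * g ξ ≠ ⊤ := by
    have heq : ∫⁻ ξ in E', (∑' γ : Γ, w γ ξ) * g ξ
        = ∑' γ : Γ, ∫⁻ ξ in E', w γ ξ * g ξ := by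
      rw [← lintegral_tsum (f := fun γ ξ => w γ ξ * g ξ) (fun γ => ((hwm γ).aemeasurable.mul hgm).restrict)]
      congr 1; ext ξ; rw [ENNReal.tsum_mul_right]
    rw [heq]
    exact (lt_of_le_of_lt hsum_le hf.lintegral_lt_top).ne
  have hae1 : ∀ᵐ ξ ∂(volume.restrict E'), (∑' γ : Γ, w γ ξ) * g ξ < ⊤ := by
    refine ae_lt_top' ?_ hfin
    exact ((Measurable.ennreal_tsum hwm).aemeasurable.mul hgm).restrict
  have haepos : ∀ᵐ ξ ∂(volume.restrict E'), 0 < f ξ := ae_restrict_of_ae hfpos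
  have hae2 : ∀ᵐ ξ ∂(volume.restrict E'),
      Summable (fun γ : Γ => 1 / (dnm γ.1 ξ) ^ 2) := by
    filter_upwards [hae1, haepos] with ξ h1 h2
    have hgne : g ξ ≠ 0 := by
      rw [hg]; dsimp only; exact (ENNReal.ofReal_pos.2 h2).ne'
    have hS : (∑' γ : Γ, w γ ξ) ≠ ⊤ := by
      intro hS
      rw [hS, ENNReal.top_mul hgne] at h1
      exact lt_irrefl _ h1
    refine (ENNReal.summable_toReal hS).congr fun γ => ?_
    rw [hw]; dsimp only; rw [ENNReal.toReal_ofReal (by positivity)]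
  set T : Set ℝ := {ξ : ℝ | Summable (fun γ : Γ => 1 / (dnm γ.1 ξ) ^ 2)} with hT
  have hE'null : volume (E' \ T) = 0 := by
    have h := ae_iff.1 hae2
    rw [Measure.restrict_apply' hE'm] at h
    refine measure_mono_null (fun ξ hξ => ?_) h
    exact ⟨hξ.2, hξ.1⟩
  set N : Set ℝ := 𝔼 \ (E' ∩ T) with hN
  have hN0 : volume N = 0 := by
    have hsub : N ⊆ (𝔼 ∩ P) ∪ (E' \ T) := by
      intro ξ hξ
      by_cases hp : ξ ∈ P
      · exact Or.inl ⟨hξ.1, hp⟩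
      · exact Or.inr ⟨⟨hξ.1, hp⟩, fun ht => hξ.2 ⟨⟨hξ.1, hp⟩, ht⟩⟩
    exact measure_mono_null hsub (measure_union_null
      (measure_mono_null Set.inter_subset_right hP0) hE'null)
  have hTinv : ∀ η : Γ, ∀ ξ ∈ E' ∩ T, moebius η.1 ξ ∈ T := by
    rintro η ξ ⟨hξE, hξT⟩
    have hden : dnm η.1 ξ ≠ 0 := hE'd η ξ hξE
    have hsum1 : Summable ((fun γ : Γ => 1 / (dnm γ.1 ξ) ^ 2) ∘ (fun γ : Γ => γ * η)) :=
      hξT.comp_injective (mul_left_injective η)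
    have hsum1' : Summable fun γ : Γ => 1 / (dnm ((γ * η : Γ)).1 ξ) ^ 2 := hsum1
    have hsum2 : Summable fun γ : Γ =>
        (dnm η.1 ξ) ^ 2 * (1 / (dnm ((γ * η : Γ)).1 ξ) ^ 2) := hsum1'.mul_left _
    refine hsum2.congr fun γ => ?_
    have hc := cocycle γ.1 η.1 hden
    have hne : dnm (γ.1 * η.1) ξ ≠ 0 := hnP ξ hξE.2 (γ * η)
    have hne2 : dnm γ.1 (moebius η.1 ξ) ≠ 0 := by
      intro h; rw [h, zero_mul] at hc; exact hne hc
    have hcoe : ((γ * η : Γ) : SL2) = γ.1 * η.1 := rfl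
    rw [hcoe, hc, mul_pow]
    field_simp
  rw [ae_iff]
  have hsubset : {ξ : ℝ | ¬ Summable (fun γ : Γ =>
      1 / ((γ : Matrix.SpecialLinearGroup (Fin 2) ℝ).1 1 0 * ξ +
            (γ : Matrix.SpecialLinearGroup (Fin 2) ℝ).1 1 1) ^ 2)} ⊆
      ((Set.univ : Set ℝ) \ ⋃ γ ∈ Γ, moebius γ '' 𝔼) ∪ ⋃ η : Γ, moebius η.1 '' N := by
    intro ξ hξ
    have hξT : ξ ∉ T := hξ
    by_cases hc : ξ ∈ ⋃ γ ∈ Γ, moebius γ '' 𝔼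
    · right
      rcases Set.mem_iUnion₂.1 hc with ⟨γ, hγ, ζ, hζ, hζξ⟩
      refine Set.mem_iUnion.2 ⟨⟨γ, hγ⟩, ζ, ?_, hζξ⟩
      by_contra hζN
      have hζG : ζ ∈ E' ∩ T := by
        by_contra h
        exact hζN ⟨hζ, h⟩
      exact hξT (hζξ ▸ hTinv ⟨γ, hγ⟩ ζ hζG)
    · exact Or.inl ⟨Set.mem_univ ξ, hc⟩
  exact measure_mono_null hsubset (measure_union_null hcover
    (measure_iUnion_null fun η => image_null η.1 hN0))
end

section
/- Let n ≥ 1, let ζ₀ ∈ 𝕋∖E_T, and let P be an extremal polynomial for the Ahlfors problem on E_T at ζ₀, i.e. deg P ≤ n, |P(ζ)| ≤ 1 for all ζ ∈ E_T, P(ζ₀) = 0, and |P'(ζ₀)| ≥ |Q'(ζ₀)| for every polynomial Q with deg Q ≤ n, |Q| ≤ 1 on E_T and Q(ζ₀) = 0. Then every root of P lies on the unit circle 𝕋, and every root of P is simple (has multiplicity one). -/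
open Complex Polynomial

def ETset (g : ℕ) (a b : Fin g → ℝ) : Set ℂ :=
  {ζ : ℂ | ‖ζ‖ = 1} \
    ⋃ j, (fun t : ℝ => Complex.exp (t * Complex.I)) '' Set.Ioo (a j) (b j)

namespace AhlforsAux

lemma cos_lt_one_aux {x : ℝ} (h0 : 0 < x) (h2 : x < 2*Real.pi) : Real.cos x < 1 := by
  rcases lt_or_eq_of_le (Real.cos_le_one x) with h | h
  · exact h
  · exfalso
    obtain ⟨m, hm⟩ := (Real.cos_eq_one_iff x).mp h
    have hπ := Real.pi_pos
    rcases lt_trichotomy m 0 with hm0 | hm0 | hm0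
    · have hm1 : m ≤ -1 := by omega
      have : (m:ℝ) ≤ -1 := by exact_mod_cast hm1
      nlinarith
    · subst hm0; simp at hm; nlinarith
    · have : (1:ℝ) ≤ (m:ℝ) := by exact_mod_cast hm0
      nlinarith

lemma sep_exists (g : ℕ) (a b : Fin g → ℝ)
    (hpos : ∀ j, 0 < a j) (hlast : ∀ j, b j < 2 * Real.pi)
    (ζ₀ : ℂ) (hζ₀T : ‖ζ₀‖ = 1) (hζ₀ : ζ₀ ∉ ETset g a b) :
    ∃ cs : ℝ, -1 ≤ cs ∧ cs < 1 ∧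
      ∀ ζ ∈ ETset g a b, ((starRingEnd ℂ) ζ₀ * ζ).re ≤ cs := by
  have hπ := Real.pi_pos
  -- ζ₀ lies in some gap arc
  have hmem : ζ₀ ∈ ⋃ j, (fun t : ℝ => Complex.exp (t * Complex.I)) '' Set.Ioo (a j) (b j) := by
    by_contra h
    exact hζ₀ ⟨hζ₀T, h⟩
  rw [Set.mem_iUnion] at hmem
  obtain ⟨j, t₀, ht₀, hexp⟩ := hmem
  obtain ⟨ht₀a, ht₀b⟩ := ht₀
  have haj := hpos j
  have hbj := hlast j
  refine ⟨max (Real.cos (t₀ - a j)) (Real.cos (b j - t₀)), ?_, ?_, ?_⟩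
  · exact le_max_of_le_left (Real.neg_one_le_cos _)
  · apply max_lt
    · exact cos_lt_one_aux (by linarith) (by linarith)
    · exact cos_lt_one_aux (by linarith) (by linarith)
  · intro ζ hζ
    by_contra hgt
    push_neg at hgt
    have hζ1 : ‖ζ‖ = 1 := hζ.1
    set w := (starRingEnd ℂ) ζ₀ * ζ with hw
    have hw1 : ‖w‖ = 1 := by
      rw [hw, norm_mul, Complex.norm_conj, hζ₀T, hζ1, one_mul]
    set θ := Complex.arg w with hθ
    have hwexp : Complex.exp ((θ:ℂ) * Complex.I) = w := by
      have := Complex.norm_mul_exp_arg_mul_I w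
      rwa [hw1, Complex.ofReal_one, one_mul] at this
    have hre : w.re = Real.cos θ := by
      conv_lhs => rw [← hwexp]
      exact Complex.exp_ofReal_mul_I_re θ
    have hθpi : θ ≤ Real.pi := Complex.arg_le_pi w
    have hθnpi : -Real.pi < θ := Complex.neg_pi_lt_arg w
    have hgt1 : Real.cos (t₀ - a j) < Real.cos θ := by
      rw [← hre]; exact lt_of_le_of_lt (le_max_left _ _) hgt
    have hgt2 : Real.cos (b j - t₀) < Real.cos θ := by
      rw [← hre]; exact lt_of_le_of_lt (le_max_right _ _) hgt
    -- show θ < b j - t₀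
    have hθb : θ < b j - t₀ := by
      rcases le_or_gt (b j - t₀) Real.pi with hc | hc
      · by_contra hcon
        push_neg at hcon
        rcases le_or_gt 0 θ with h0 | h0
        · have := Real.cos_le_cos_of_nonneg_of_le_pi (by linarith) hθpi hcon
          linarith
        · linarith
      · linarith
    have hθa : a j - t₀ < θ := by
      rcases le_or_gt 0 θ with h0 | h0
      · linarith
      · rcases le_or_gt (t₀ - a j) Real.pi with hc | hc
        · by_contra hcon
          push_neg at hcon
          have h1 : t₀ - a j ≤ -θ := by linarith
          have := Real.cos_le_cos_of_nonneg_of_le_pi (by linarith) (by linarith) h1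
          rw [Real.cos_neg] at this
          linarith
        · linarith
    -- then ζ is in the gap arc: contradiction
    have hζeq : ζ = Complex.exp (((t₀ + θ : ℝ) : ℂ) * Complex.I) := by
      have h1 : ζ₀ * w = ζ := by
        rw [hw, ← mul_assoc, Complex.mul_conj]
        have : Complex.normSq ζ₀ = 1 := by
          rw [Complex.normSq_eq_norm_sq, hζ₀T]; norm_num
        rw [this]; simp
      rw [← h1, ← hexp, ← hwexp]
      rw [← Complex.exp_add]
      push_cast
      ring_nf
    apply hζ.2
    apply Set.mem_iUnion.mpr
    exact ⟨j, ⟨t₀ + θ, ⟨by linarith, by linarith⟩, hζeq.symm⟩⟩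



lemma re_mul_conj_comm (x y : ℂ) : (x * (starRingEnd ℂ) y).re = (y * (starRingEnd ℂ) x).re := by
  simp [Complex.mul_re]; ring

lemma normSq_add' (x y : ℂ) (t : ℝ) :
    Complex.normSq (x + (t:ℂ) * y) =
      Complex.normSq x + t^2 * Complex.normSq y + 2*t*((y * (starRingEnd ℂ) x).re) := by
  rw [Complex.normSq_add]
  have h1 : Complex.normSq ((t:ℂ) * y) = t^2 * Complex.normSq y := by
    rw [Complex.normSq_mul, Complex.normSq_ofReal]; ring
  have h2 : (x * (starRingEnd ℂ) ((t:ℂ) * y)).re = t * ((x * (starRingEnd ℂ) y).re) := by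
    rw [map_mul, Complex.conj_ofReal]
    rw [show x * ((t:ℂ) * (starRingEnd ℂ) y) = (t:ℂ) * (x * (starRingEnd ℂ) y) by ring]
    simp [Complex.mul_re]
  rw [h1, h2, re_mul_conj_comm x y]; ring

lemma abs_le_abs_of_normSq_le {x y : ℂ} (h : Complex.normSq x ≤ Complex.normSq y) :
    ‖x‖ ≤ ‖y‖ := by
  rw [Complex.norm_def, Complex.norm_def]
  exact Real.sqrt_le_sqrt h

lemma abs_lt_abs_of_normSq_lt {x y : ℂ} (h : Complex.normSq x < Complex.normSq y) :
    ‖x‖ < ‖y‖ := by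
  rw [Complex.norm_def, Complex.norm_def]
  exact Real.sqrt_lt_sqrt (Complex.normSq_nonneg x) h

lemma caseA_re (ζ z ζ₀ : ℂ) (v c : ℝ) (hζ : Complex.normSq ζ = 1)
    (hv : v * (1 - Complex.normSq z) = (ζ₀ * (starRingEnd ℂ) z).re - c) :
    (((ζ₀ + (v:ℂ)*z) + (v:ℂ)*ζ) * (starRingEnd ℂ) (ζ - z)).re
      = ((starRingEnd ℂ) ζ₀ * ζ).re - c := by
  have hζ' : ζ.re*ζ.re + ζ.im*ζ.im = 1 := by simpa [Complex.normSq_apply] using hζ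
  have hv' : v * (1 - (z.re*z.re + z.im*z.im)) = (ζ₀.re*z.re + ζ₀.im*z.im) - c := by
    simpa [Complex.normSq_apply, Complex.mul_re] using hv
  simp only [Complex.mul_re, Complex.add_re, Complex.add_im, Complex.sub_re, Complex.sub_im,
    Complex.conj_re, Complex.conj_im, Complex.ofReal_re, Complex.ofReal_im, Complex.mul_im]
  linear_combination v * hζ' + hv'

lemma caseB_id (ζ z ζ₀ : ℂ) (c : ℝ) (hζ : ζ * (starRingEnd ℂ) ζ = 1)
    (hz : z * (starRingEnd ℂ) z = 1) :
    (((-z*ζ) * ((starRingEnd ℂ) ζ₀ * ζ - (c:ℂ))) * (starRingEnd ℂ) ((ζ - z)^2)).re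
      = Complex.normSq (ζ - z) * (((starRingEnd ℂ) ζ₀ * ζ).re - c) := by
  have key : ((-z*ζ) * ((starRingEnd ℂ) ζ₀ * ζ - (c:ℂ))) * (starRingEnd ℂ) ((ζ - z)^2)
      = ((Complex.normSq (ζ - z) : ℝ) : ℂ) * ((starRingEnd ℂ) ζ₀ * ζ - (c:ℂ)) := by
    rw [← Complex.mul_conj (ζ - z)]
    rw [map_pow, map_sub]
    set cζ := (starRingEnd ℂ) ζ
    set cz := (starRingEnd ℂ) z
    have h : (-z*ζ) * (cζ - cz)^2 = (ζ - z) * (cζ - cz) := by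
      linear_combination ((cζ - cz) * (-z)) * hζ + ((cζ - cz) * ζ) * hz
    calc (-z*ζ) * ((starRingEnd ℂ) ζ₀ * ζ - (c:ℂ)) * (cζ - cz)^2
        = ((-z*ζ) * (cζ - cz)^2) * ((starRingEnd ℂ) ζ₀ * ζ - (c:ℂ)) := by ring
      _ = ((ζ - z) * (cζ - cz)) * ((starRingEnd ℂ) ζ₀ * ζ - (c:ℂ)) := by rw [h]
  rw [key]
  simp [Complex.mul_re, Complex.ofReal_re, Complex.ofReal_im, Complex.sub_re, Complex.sub_im]

lemma core_contra {g : ℕ} {a b : Fin g → ℝ} {n : ℕ} {ζ₀ : ℂ}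
    {P A V W : Polynomial ℂ} {t : ℝ}
    (hext : ∀ Q : Polynomial ℂ, Q.natDegree ≤ n →
      (∀ ζ ∈ ETset g a b, ‖Q.eval ζ‖ ≤ 1) → Q.eval ζ₀ = 0 →
      ‖(Polynomial.derivative Q).eval ζ₀‖ ≤
        ‖(Polynomial.derivative P).eval ζ₀‖)
    (hPfac : P = A * V) (hV0 : V.eval ζ₀ = 0)
    (hP'ne : (Polynomial.derivative P).eval ζ₀ ≠ 0)
    (hdegQ : ((A + Polynomial.C (t:ℂ) * W) * V).natDegree ≤ n)
    (hbdQ : ∀ ζ ∈ ETset g a b, ‖((A + Polynomial.C (t:ℂ) * W) * V).eval ζ‖ ≤ 1)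
    (hgain : ‖A.eval ζ₀‖ < ‖A.eval ζ₀ + (t:ℂ) * W.eval ζ₀‖) :
    False := by
  set B := A + Polynomial.C (t:ℂ) * W with hB
  have hQ0 : (B * V).eval ζ₀ = 0 := by simp [hV0]
  have h := hext (B * V) hdegQ hbdQ hQ0
  have hQ' : (Polynomial.derivative (B * V)).eval ζ₀
      = B.eval ζ₀ * (Polynomial.derivative V).eval ζ₀ := by
    rw [Polynomial.derivative_mul]; simp [hV0]
  have hP' : (Polynomial.derivative P).eval ζ₀
      = A.eval ζ₀ * (Polynomial.derivative V).eval ζ₀ := by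
    rw [hPfac, Polynomial.derivative_mul]; simp [hV0]
  rw [hQ', hP', norm_mul, norm_mul] at h
  have hV' : 0 < ‖(Polynomial.derivative V).eval ζ₀‖ := by
    rcases eq_or_ne ((Polynomial.derivative V).eval ζ₀) 0 with h0 | h0
    · exact absurd (by rw [hP', h0, mul_zero]) hP'ne
    · exact norm_pos_iff.mpr h0
  have hle : ‖B.eval ζ₀‖ ≤ ‖A.eval ζ₀‖ :=
    le_of_mul_le_mul_right h hV'
  have hBeval : B.eval ζ₀ = A.eval ζ₀ + (t:ℂ) * W.eval ζ₀ := by simp [hB]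
  rw [hBeval] at hle
  linarith


lemma caseA {g n : ℕ} {a b : Fin g → ℝ} {ζ₀ : ℂ} {P : Polynomial ℂ}
    (hζ₀T : ‖ζ₀‖ = 1)
    (hdeg : P.natDegree ≤ n)
    (hbd : ∀ ζ ∈ ETset g a b, ‖P.eval ζ‖ ≤ 1)
    (hzero : P.eval ζ₀ = 0)
    (hext : ∀ Q : Polynomial ℂ, Q.natDegree ≤ n →
      (∀ ζ ∈ ETset g a b, ‖Q.eval ζ‖ ≤ 1) → Q.eval ζ₀ = 0 →
      ‖(Polynomial.derivative Q).eval ζ₀‖ ≤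
        ‖(Polynomial.derivative P).eval ζ₀‖)
    (hP'ne : (Polynomial.derivative P).eval ζ₀ ≠ 0)
    {cs : ℝ} (hcs1 : cs < 1)
    (hsep : ∀ ζ ∈ ETset g a b, ((starRingEnd ℂ) ζ₀ * ζ).re ≤ cs)
    {z : ℂ} (hzroot : P.eval z = 0) (hza : ‖z‖ ≠ 1) : False := by
  set δ : ℝ := (1 - cs)/2 with hδdef
  have hδ : 0 < δ := by rw [hδdef]; linarith
  set c : ℝ := cs + δ with hcdef
  obtain ⟨V, hPfac⟩ : ∃ V, P = (X - Polynomial.C z) * V := Polynomial.dvd_iff_isRoot.mpr hzroot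
  have hzζ₀ : z ≠ ζ₀ := fun h => hza (by rw [h, hζ₀T])
  have hζ₀z : ζ₀ - z ≠ 0 := sub_ne_zero.mpr (Ne.symm hzζ₀)
  have hV0 : V.eval ζ₀ = 0 := by
    have h1 : (ζ₀ - z) * V.eval ζ₀ = 0 := by
      have h0 := hzero; rw [hPfac] at h0; simpa using h0
    rcases mul_eq_zero.mp h1 with h | h
    · exact absurd h hζ₀z
    · exact h
  have hVne : V ≠ 0 := by
    intro h; apply hP'ne; rw [hPfac, h, mul_zero]; simp
  have hnz : 1 - Complex.normSq z ≠ 0 := by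
    intro h
    apply hza
    have h1 : Complex.normSq z = 1 := by linarith
    rw [Complex.normSq_eq_norm_sq] at h1
    nlinarith [norm_nonneg z]
  set v : ℝ := ((ζ₀ * (starRingEnd ℂ) z).re - c) / (1 - Complex.normSq z) with hvdef
  have hv : v * (1 - Complex.normSq z) = (ζ₀ * (starRingEnd ℂ) z).re - c :=
    div_mul_cancel₀ _ hnz
  set u : ℂ := ζ₀ + (v:ℂ) * z with hudef
  set W : Polynomial ℂ := Polynomial.C u + Polynomial.C ((v:ℝ):ℂ) * X with hWdef
  have hWev : ∀ ζ : ℂ, W.eval ζ = (ζ₀ + (v:ℂ)*z) + (v:ℂ)*ζ := by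
    intro ζ; rw [hWdef, hudef]; simp
  set Bw : ℝ := ‖u‖ + |v| with hBwdef
  have hBw0 : 0 ≤ Bw := by
    rw [hBwdef]; positivity
  set t : ℝ := δ / (Bw^2 + 1) with htdef
  have ht : 0 < t := by
    rw [htdef]; positivity
  have htB : t * (Bw^2 + 1) = δ := div_mul_cancel₀ _ (by positivity)
  have hWb : ∀ ζ : ℂ, ‖ζ‖ = 1 → ‖W.eval ζ‖ ≤ Bw := by
    intro ζ h1
    rw [hWev, hBwdef]
    calc ‖(ζ₀ + (v:ℂ)*z) + (v:ℂ)*ζ‖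
        ≤ ‖ζ₀ + (v:ℂ)*z‖ + ‖(v:ℂ)*ζ‖ := norm_add_le _ _
      _ = ‖u‖ + |v| := by
          rw [norm_mul, Complex.norm_real, Real.norm_eq_abs, h1, mul_one, hudef]
  -- the perturbed polynomial is bounded on E_T
  have hbdQ : ∀ ζ ∈ ETset g a b,
      ‖(((X - Polynomial.C z) + Polynomial.C ((t:ℝ):ℂ) * W) * V).eval ζ‖ ≤ 1 := by
    intro ζ hζ
    have hζ1 : ‖ζ‖ = 1 := hζ.1
    have hζn : Complex.normSq ζ = 1 := by rw [Complex.normSq_eq_norm_sq, hζ1]; norm_num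
    have hre : (W.eval ζ * (starRingEnd ℂ) (ζ - z)).re = ((starRingEnd ℂ) ζ₀ * ζ).re - c := by
      rw [hWev]; exact caseA_re ζ z ζ₀ v c hζn hv
    have h2 : (W.eval ζ * (starRingEnd ℂ) (ζ - z)).re ≤ -δ := by
      rw [hre]
      have := hsep ζ hζ
      rw [hcdef]; linarith
    have h3 : Complex.normSq (W.eval ζ) ≤ Bw^2 := by
      have hb := hWb ζ hζ1
      rw [Complex.normSq_eq_norm_sq]
      nlinarith [norm_nonneg (W.eval ζ)]
    have hkey : Complex.normSq ((ζ - z) + (t:ℂ) * W.eval ζ) ≤ Complex.normSq (ζ - z) := by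
      rw [normSq_add']
      nlinarith [ht, hδ, mul_le_mul_of_nonneg_left h3 (le_of_lt (mul_pos ht ht)),
        mul_le_mul_of_nonneg_left h2 (le_of_lt ht)]
    have heval : (((X - Polynomial.C z) + Polynomial.C ((t:ℝ):ℂ) * W) * V).eval ζ
        = ((ζ - z) + ((t:ℝ):ℂ)*(W.eval ζ)) * V.eval ζ := by simp
    rw [heval, norm_mul]
    have h5 : ‖(ζ - z) + ((t:ℝ):ℂ)*(W.eval ζ)‖ ≤ ‖ζ - z‖ :=
      abs_le_abs_of_normSq_le hkey
    have h6 : ‖P.eval ζ‖ ≤ 1 := hbd ζ hζ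
    have h7 : ‖P.eval ζ‖ = ‖ζ - z‖ * ‖V.eval ζ‖ := by
      rw [hPfac]; simp [map_mul]
    calc ‖(ζ - z) + ((t:ℝ):ℂ)*(W.eval ζ)‖ * ‖V.eval ζ‖
        ≤ ‖ζ - z‖ * ‖V.eval ζ‖ := by
          exact mul_le_mul_of_nonneg_right h5 (norm_nonneg _)
      _ = ‖P.eval ζ‖ := h7.symm
      _ ≤ 1 := h6
  -- strict gain at ζ₀
  have hζ₀n : Complex.normSq ζ₀ = 1 := by rw [Complex.normSq_eq_norm_sq, hζ₀T]; norm_num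
  have hre0 : (W.eval ζ₀ * (starRingEnd ℂ) (ζ₀ - z)).re = δ := by
    rw [hWev]
    rw [caseA_re ζ₀ z ζ₀ v c hζ₀n hv]
    have h1 : ((starRingEnd ℂ) ζ₀ * ζ₀).re = 1 := by
      rw [mul_comm, Complex.mul_conj, hζ₀n]; simp
    rw [h1, hcdef, hδdef]; ring
  have hgain : ‖(X - Polynomial.C z).eval ζ₀‖
      < ‖(X - Polynomial.C z).eval ζ₀ + ((t:ℝ):ℂ) * W.eval ζ₀‖ := by
    simp only [Polynomial.eval_sub, Polynomial.eval_X, Polynomial.eval_C]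
    apply abs_lt_abs_of_normSq_lt
    rw [normSq_add', hre0]
    nlinarith [Complex.normSq_nonneg (W.eval ζ₀), ht, hδ]
  -- degree bound
  have hdegQ : (((X - Polynomial.C z) + Polynomial.C ((t:ℝ):ℂ) * W) * V).natDegree ≤ n := by
    have hA : (X - Polynomial.C z).natDegree = 1 := Polynomial.natDegree_X_sub_C z
    have hB1 : ((X - Polynomial.C z) + Polynomial.C ((t:ℝ):ℂ) * W).natDegree ≤ 1 := by
      refine le_trans (Polynomial.natDegree_add_le _ _) (max_le ?_ ?_)
      · rw [hA]
      · refine le_trans (Polynomial.natDegree_C_mul_le _ _) ?_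
        rw [hWdef]
        refine le_trans (Polynomial.natDegree_add_le _ _) (max_le ?_ ?_)
        · simp
        · refine le_trans (Polynomial.natDegree_C_mul_le _ _) ?_
          simp
    have hPdeg : P.natDegree = 1 + V.natDegree := by
      rw [hPfac, Polynomial.natDegree_mul (Polynomial.X_sub_C_ne_zero z) hVne, hA]
    have h8 : (((X - Polynomial.C z) + Polynomial.C ((t:ℝ):ℂ) * W) * V).natDegree
        ≤ ((X - Polynomial.C z) + Polynomial.C ((t:ℝ):ℂ) * W).natDegree + V.natDegree :=
      Polynomial.natDegree_mul_le
    omega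
  exact core_contra hext hPfac hV0 hP'ne hdegQ hbdQ hgain


set_option maxHeartbeats 1600000 in
lemma caseB {g n : ℕ} {a b : Fin g → ℝ} {ζ₀ : ℂ} {P : Polynomial ℂ}
    (hζ₀T : ‖ζ₀‖ = 1)
    (hdeg : P.natDegree ≤ n)
    (hbd : ∀ ζ ∈ ETset g a b, ‖P.eval ζ‖ ≤ 1)
    (hzero : P.eval ζ₀ = 0)
    (hext : ∀ Q : Polynomial ℂ, Q.natDegree ≤ n →
      (∀ ζ ∈ ETset g a b, ‖Q.eval ζ‖ ≤ 1) → Q.eval ζ₀ = 0 →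
      ‖(Polynomial.derivative Q).eval ζ₀‖ ≤
        ‖(Polynomial.derivative P).eval ζ₀‖)
    (hP'ne : (Polynomial.derivative P).eval ζ₀ ≠ 0)
    {cs : ℝ} (hcsm1 : -1 ≤ cs) (hcs1 : cs < 1)
    (hsep : ∀ ζ ∈ ETset g a b, ((starRingEnd ℂ) ζ₀ * ζ).re ≤ cs)
    {z : ℂ} (hz1 : ‖z‖ = 1) (hzζ₀ : z ≠ ζ₀)
    (hzroot : P.eval z = 0) (hz' : (Polynomial.derivative P).eval z = 0) : False := by
  set δ : ℝ := (1 - cs)/2 with hδdef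
  have hδ : 0 < δ := by rw [hδdef]; linarith
  set c : ℝ := cs + δ with hcdef
  have hc0 : 0 ≤ c := by rw [hcdef, hδdef]; linarith
  have hc1 : c ≤ 1 := by rw [hcdef, hδdef]; linarith
  -- double factorization
  obtain ⟨S, hS⟩ : ∃ S, P = (X - Polynomial.C z) * S := Polynomial.dvd_iff_isRoot.mpr hzroot
  have hSz : S.eval z = 0 := by
    have h1 : (Polynomial.derivative P).eval z = S.eval z := by
      rw [hS, Polynomial.derivative_mul]
      simp
    rw [← h1]; exact hz'
  obtain ⟨V, hV⟩ : ∃ V, S = (X - Polynomial.C z) * V := Polynomial.dvd_iff_isRoot.mpr hSz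
  have hPfac : P = (X - Polynomial.C z)^2 * V := by rw [hS, hV]; ring
  have hζ₀z : ζ₀ - z ≠ 0 := sub_ne_zero.mpr (Ne.symm hzζ₀)
  have hV0 : V.eval ζ₀ = 0 := by
    have h1 : (ζ₀ - z)^2 * V.eval ζ₀ = 0 := by
      have h0 := hzero; rw [hPfac] at h0; simpa using h0
    rcases mul_eq_zero.mp h1 with h | h
    · exact absurd (pow_eq_zero_iff (n := 2) (by norm_num) |>.mp h) hζ₀z
    · exact h
  have hVne : V ≠ 0 := by
    intro h; apply hP'ne; rw [hPfac, h, mul_zero]; simp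
  -- bound for V on the circle
  obtain ⟨M, hM1, hMb⟩ : ∃ M : ℝ, 1 ≤ M ∧
      ∀ ζ : ℂ, ‖ζ‖ = 1 → ‖V.eval ζ‖ ≤ M := by
    obtain ⟨x₀, hx₀, hMx⟩ := (isCompact_sphere (0:ℂ) 1).exists_isMaxOn ⟨1, by simp⟩
      ((continuous_norm.comp V.continuous).continuousOn)
    refine ⟨max (‖V.eval x₀‖) 1, le_max_right _ _, ?_⟩
    intro ζ h1
    have hmem : ζ ∈ Metric.sphere (0:ℂ) 1 := by
      rw [mem_sphere_zero_iff_norm, h1]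
    exact le_trans (hMx hmem) (le_max_left _ _)
  have hM0 : 0 < M := lt_of_lt_of_le one_pos hM1
  obtain ⟨t, ht, ht1, ht2⟩ : ∃ t : ℝ, 0 < t ∧ t ≤ 1/(4*M) ∧ t ≤ (1/(2*M))*δ/2 :=
    ⟨min (1/(4*M)) ((1/(2*M))*δ/2),
      lt_min (by positivity) (by positivity), min_le_left _ _, min_le_right _ _⟩
  -- the perturbation polynomial
  set W : Polynomial ℂ := Polynomial.C (-z) * X *
      (Polynomial.C ((starRingEnd ℂ) ζ₀) * X - Polynomial.C ((c:ℝ):ℂ)) with hWdef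
  have hWev : ∀ ζ : ℂ, W.eval ζ = (-z*ζ) * ((starRingEnd ℂ) ζ₀ * ζ - ((c:ℝ):ℂ)) := by
    intro ζ; rw [hWdef]; simp
  have hWabs : ∀ ζ : ℂ, ‖ζ‖ = 1 → ‖W.eval ζ‖ ≤ 2 := by
    intro ζ h1
    rw [hWev, norm_mul]
    have ha : ‖-z*ζ‖ = 1 := by
      rw [norm_mul, norm_neg, hz1, h1, one_mul]
    rw [ha, one_mul]
    calc ‖(starRingEnd ℂ) ζ₀ * ζ - ((c:ℝ):ℂ)‖
        ≤ ‖(starRingEnd ℂ) ζ₀ * ζ‖ + ‖((c:ℝ):ℂ)‖ := by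
          simpa [sub_eq_add_neg] using norm_add_le ((starRingEnd ℂ) ζ₀ * ζ) (-((c:ℝ):ℂ))
      _ ≤ 2 := by
          rw [norm_mul, Complex.norm_conj, hζ₀T, h1, one_mul, Complex.norm_real, Real.norm_eq_abs]
          rw [_root_.abs_of_nonneg hc0]; linarith
  have hzc : z * (starRingEnd ℂ) z = 1 := by
    rw [Complex.mul_conj]
    rw [Complex.normSq_eq_norm_sq, hz1]; norm_num
  -- bound on E_T
  have hbdQ : ∀ ζ ∈ ETset g a b,
      ‖(((X - Polynomial.C z)^2 + Polynomial.C ((t:ℝ):ℂ) * W) * V).eval ζ‖ ≤ 1 := by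
    intro ζ hζ
    have hζ1 : ‖ζ‖ = 1 := hζ.1
    have hζc : ζ * (starRingEnd ℂ) ζ = 1 := by
      rw [Complex.mul_conj, Complex.normSq_eq_norm_sq, hζ1]; norm_num
    have hre : (W.eval ζ * (starRingEnd ℂ) ((ζ - z)^2)).re
        = Complex.normSq (ζ - z) * (((starRingEnd ℂ) ζ₀ * ζ).re - c) := by
      rw [hWev]; exact caseB_id ζ z ζ₀ c hζc hzc
    have hsep' : ((starRingEnd ℂ) ζ₀ * ζ).re ≤ cs := hsep ζ hζ
    have hVb : ‖V.eval ζ‖ ≤ M := hMb ζ hζ1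
    have heval : (((X - Polynomial.C z)^2 + Polynomial.C ((t:ℝ):ℂ) * W) * V).eval ζ
        = ((ζ - z)^2 + ((t:ℝ):ℂ)*(W.eval ζ)) * V.eval ζ := by simp
    have hP1 : ‖P.eval ζ‖ ≤ 1 := hbd ζ hζ
    have hPev : ‖P.eval ζ‖ = Complex.normSq (ζ - z) * ‖V.eval ζ‖ := by
      rw [hPfac]
      simp only [Polynomial.eval_mul, Polynomial.eval_pow, Polynomial.eval_sub,
        Polynomial.eval_X, Polynomial.eval_C, norm_mul, norm_pow]
      rw [Complex.sq_norm]
    rw [heval, norm_mul]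
    have habsA : ‖(ζ - z)^2‖ = Complex.normSq (ζ - z) := by
      rw [norm_pow, Complex.sq_norm]
    set N : ℝ := Complex.normSq (ζ - z) with hNdef
    have hN0 : 0 ≤ N := Complex.normSq_nonneg _
    rcases le_or_gt N (1/(2*M)) with hnear | hfar
    · -- near the double root : use absolute slack
      have h1 : ‖(ζ - z)^2 + ((t:ℝ):ℂ)*(W.eval ζ)‖
          ≤ N + t*2 := by
        calc ‖(ζ - z)^2 + ((t:ℝ):ℂ)*(W.eval ζ)‖
            ≤ ‖(ζ - z)^2‖ + ‖((t:ℝ):ℂ)*(W.eval ζ)‖ :=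
              norm_add_le _ _
          _ ≤ N + t*2 := by
              rw [habsA, norm_mul, Complex.norm_real, Real.norm_eq_abs, abs_of_pos ht]
              have := hWabs ζ hζ1
              nlinarith [ht]
      have h2 : N + t*2 ≤ 1/M := by
        have e0 : (1:ℝ)/(4*M) * 2 = 1/(2*M) := by field_simp; ring
        have e1 : t*2 ≤ 1/(2*M) := by
          rw [← e0]
          have := mul_le_mul_of_nonneg_right ht1 (by norm_num : (0:ℝ) ≤ 2)
          linarith
        have e2 : (1:ℝ)/(2*M) + 1/(2*M) = 1/M := by
          rw [← add_div, div_eq_div_iff (by positivity) (by positivity)]; ring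
        linarith
      calc ‖(ζ - z)^2 + ((t:ℝ):ℂ)*(W.eval ζ)‖ * ‖V.eval ζ‖
          ≤ (N + t*2) * M := by
            apply mul_le_mul h1 hVb (norm_nonneg _)
            nlinarith [ht, hN0]
        _ ≤ (1/M) * M := mul_le_mul_of_nonneg_right h2 (le_of_lt hM0)
        _ = 1 := by field_simp
    · -- away from the double root : use comparison with P
      have h3 : Complex.normSq (W.eval ζ) ≤ 4 := by
        have hb := hWabs ζ hζ1
        rw [Complex.normSq_eq_norm_sq]
        nlinarith [norm_nonneg (W.eval ζ)]
      have hkey : Complex.normSq ((ζ - z)^2 + ((t:ℝ):ℂ)*(W.eval ζ))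
          ≤ Complex.normSq ((ζ - z)^2) := by
        rw [normSq_add', hre]
        have hNsq : Complex.normSq ((ζ - z)^2) = N^2 := by
          rw [map_pow]
        rw [hNsq]
        have h4 : ((starRingEnd ℂ) ζ₀ * ζ).re - c ≤ -δ := by rw [hcdef]; linarith
        have h5 : N * (((starRingEnd ℂ) ζ₀ * ζ).re - c) ≤ N * (-δ) :=
          mul_le_mul_of_nonneg_left h4 hN0
        have h6 : t^2 * Complex.normSq (W.eval ζ) ≤ t^2 * 4 := by
          nlinarith [sq_nonneg t]
        have h7 : t*4 ≤ 2*(N*δ) := by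
          have hNs : 1/(2*M) ≤ N := hfar.le
          have e1 : 0 ≤ (N - 1/(2*M)) * δ := mul_nonneg (by linarith) hδ.le
          nlinarith [hδ, hM0]
        nlinarith [mul_le_mul_of_nonneg_left h5 (by linarith : (0:ℝ) ≤ 2*t), h6, h7, ht]
      have h5 : ‖(ζ - z)^2 + ((t:ℝ):ℂ)*(W.eval ζ)‖ ≤ N := by
        have := abs_le_abs_of_normSq_le hkey
        rwa [habsA] at this
      calc ‖(ζ - z)^2 + ((t:ℝ):ℂ)*(W.eval ζ)‖ * ‖V.eval ζ‖
          ≤ N * ‖V.eval ζ‖ := by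
            exact mul_le_mul_of_nonneg_right h5 (norm_nonneg _)
        _ = ‖P.eval ζ‖ := hPev.symm
        _ ≤ 1 := hP1
  -- strict gain at ζ₀
  have hζ₀c : ζ₀ * (starRingEnd ℂ) ζ₀ = 1 := by
    rw [Complex.mul_conj, Complex.normSq_eq_norm_sq, hζ₀T]; norm_num
  have hre0 : (W.eval ζ₀ * (starRingEnd ℂ) ((ζ₀ - z)^2)).re
      = Complex.normSq (ζ₀ - z) * δ := by
    rw [hWev, caseB_id ζ₀ z ζ₀ c hζ₀c hzc]
    have h1 : ((starRingEnd ℂ) ζ₀ * ζ₀).re = 1 := by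
      rw [mul_comm, hζ₀c]; norm_num
    rw [h1, hcdef, hδdef]; ring_nf
  have hN₀ : 0 < Complex.normSq (ζ₀ - z) := Complex.normSq_pos.mpr hζ₀z
  have hgain : ‖((X - Polynomial.C z)^2).eval ζ₀‖
      < ‖((X - Polynomial.C z)^2).eval ζ₀ + ((t:ℝ):ℂ) * W.eval ζ₀‖ := by
    simp only [Polynomial.eval_pow, Polynomial.eval_sub, Polynomial.eval_X, Polynomial.eval_C]
    apply abs_lt_abs_of_normSq_lt
    rw [normSq_add', hre0]
    have hpos : 0 < 2*t*(Complex.normSq (ζ₀ - z)*δ) :=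
      mul_pos (by linarith : (0:ℝ) < 2*t) (mul_pos hN₀ hδ)
    nlinarith [hpos, mul_nonneg (sq_nonneg t) (Complex.normSq_nonneg (W.eval ζ₀))]
  -- degree bound
  have hdegQ : (((X - Polynomial.C z)^2 + Polynomial.C ((t:ℝ):ℂ) * W) * V).natDegree ≤ n := by
    have hA : ((X - Polynomial.C z)^2).natDegree = 2 := by
      rw [Polynomial.natDegree_pow, Polynomial.natDegree_X_sub_C]
    have hWd : W.natDegree ≤ 2 := by
      rw [hWdef]
      refine le_trans Polynomial.natDegree_mul_le ?_
      have h1 : (Polynomial.C (-z) * X).natDegree ≤ 1 := by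
        refine le_trans (Polynomial.natDegree_C_mul_le _ _) ?_
        simp
      have h2 : (Polynomial.C ((starRingEnd ℂ) ζ₀) * X - Polynomial.C ((c:ℝ):ℂ)).natDegree ≤ 1 := by
        refine le_trans (Polynomial.natDegree_sub_le _ _) (max_le ?_ ?_)
        · refine le_trans (Polynomial.natDegree_C_mul_le _ _) ?_
          simp
        · simp
      omega
    have hB1 : ((X - Polynomial.C z)^2 + Polynomial.C ((t:ℝ):ℂ) * W).natDegree ≤ 2 := by
      refine le_trans (Polynomial.natDegree_add_le _ _) (max_le ?_ ?_)
      · rw [hA]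
      · exact le_trans (Polynomial.natDegree_C_mul_le _ _) hWd
    have hAne : (X - Polynomial.C z)^2 ≠ 0 := pow_ne_zero _ (Polynomial.X_sub_C_ne_zero z)
    have hPdeg : P.natDegree = 2 + V.natDegree := by
      rw [hPfac, Polynomial.natDegree_mul hAne hVne, hA]
    have h8 : (((X - Polynomial.C z)^2 + Polynomial.C ((t:ℝ):ℂ) * W) * V).natDegree
        ≤ ((X - Polynomial.C z)^2 + Polynomial.C ((t:ℝ):ℂ) * W).natDegree + V.natDegree :=
      Polynomial.natDegree_mul_le
    omega
  exact core_contra hext hPfac hV0 hP'ne hdegQ hbdQ hgain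


end AhlforsAux

/-- Every root of an extremal polynomial for the Ahlfors problem on a system of arcs `E_T`
at a point `ζ₀ ∈ 𝕋 ∖ E_T` lies on the unit circle and is simple. -/
theorem stmt8 (g : ℕ) (hg : 1 ≤ g) (a b : Fin g → ℝ)
    (hpos : ∀ j, 0 < a j) (hab : ∀ j, a j < b j)
    (hord : ∀ j k : Fin g, j < k → b j < a k) (hlast : ∀ j, b j < 2 * Real.pi)
    (n : ℕ) (hn : 1 ≤ n)
    (ζ₀ : ℂ) (hζ₀T : ‖ζ₀‖ = 1) (hζ₀ : ζ₀ ∉ ETset g a b)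
    (P : Polynomial ℂ) (hdeg : P.natDegree ≤ n)
    (hbd : ∀ ζ ∈ ETset g a b, ‖P.eval ζ‖ ≤ 1)
    (hzero : P.eval ζ₀ = 0)
    (hext : ∀ Q : Polynomial ℂ, Q.natDegree ≤ n →
      (∀ ζ ∈ ETset g a b, ‖Q.eval ζ‖ ≤ 1) → Q.eval ζ₀ = 0 →
      ‖(Polynomial.derivative Q).eval ζ₀‖ ≤
        ‖(Polynomial.derivative P).eval ζ₀‖) :
    ∀ z : ℂ, P.eval z = 0 →
      ‖z‖ = 1 ∧ (Polynomial.derivative P).eval z ≠ 0 := by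
  intro z hz
  -- Step 0 : the linear test polynomial shows |P'(ζ₀)| ≥ 1/2
  have h12 : (1:ℝ)/2 ≤ ‖(Polynomial.derivative P).eval ζ₀‖ := by
    have hQdeg : (Polynomial.C (2⁻¹ : ℂ) * (X - Polynomial.C ζ₀)).natDegree ≤ n := by
      refine le_trans (Polynomial.natDegree_C_mul_le _ _) ?_
      rw [Polynomial.natDegree_X_sub_C]; exact hn
    have hQbd : ∀ ζ ∈ ETset g a b,
        ‖(Polynomial.C (2⁻¹:ℂ) * (X - Polynomial.C ζ₀)).eval ζ‖ ≤ 1 := by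
      intro ζ hζ
      have h1 : ‖ζ‖ = 1 := hζ.1
      simp only [Polynomial.eval_mul, Polynomial.eval_C, Polynomial.eval_sub, Polynomial.eval_X]
      rw [norm_mul]
      have h2 : ‖ζ - ζ₀‖ ≤ 2 := by
        calc ‖ζ - ζ₀‖ ≤ ‖ζ‖ + ‖ζ₀‖ := by
              simpa [sub_eq_add_neg] using norm_add_le ζ (-ζ₀)
          _ = 2 := by rw [h1, hζ₀T]; norm_num
      have h3 : ‖(2⁻¹:ℂ)‖ = 1/2 := by
        rw [show ((2⁻¹:ℂ)) = (2:ℂ)⁻¹ from rfl, norm_inv, Complex.norm_two]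
        norm_num
      rw [h3]; linarith
    have hQ0 : (Polynomial.C (2⁻¹:ℂ) * (X - Polynomial.C ζ₀)).eval ζ₀ = 0 := by simp
    have hh := hext _ hQdeg hQbd hQ0
    have hd : (Polynomial.derivative (Polynomial.C (2⁻¹:ℂ) * (X - Polynomial.C ζ₀))).eval ζ₀
        = 2⁻¹ := by
      simp
    rw [hd] at hh
    have h3 : ‖(2⁻¹:ℂ)‖ = 1/2 := by
      rw [show ((2⁻¹:ℂ)) = (2:ℂ)⁻¹ from rfl, norm_inv, Complex.norm_two]
      norm_num
    rw [h3] at hh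
    exact hh
  have hP'ne : (Polynomial.derivative P).eval ζ₀ ≠ 0 := by
    intro h; rw [h] at h12; simp at h12; linarith
  obtain ⟨cs, hcsm1, hcs1, hsep⟩ := AhlforsAux.sep_exists g a b hpos hlast ζ₀ hζ₀T hζ₀
  have habs1 : ‖z‖ = 1 := by
    by_contra hza
    exact AhlforsAux.caseA hζ₀T hdeg hbd hzero hext hP'ne hcs1 hsep hz hza
  refine ⟨habs1, ?_⟩
  intro hz'
  rcases eq_or_ne z ζ₀ with h | h
  · rw [h] at hz'; exact hP'ne hz'
  · exact AhlforsAux.caseB hζ₀T hdeg hbd hzero hext hP'ne hcsm1 hcs1 hsep habs1 h hz hz'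
end

section
/- Let n ≥ 1, let ζ₀ ∈ 𝕋∖E_T, and let P be an extremal polynomial for the Ahlfors problem on E_T at ζ₀ (deg P ≤ n, |P| ≤ 1 on E_T, P(ζ₀) = 0, and |P'(ζ₀)| maximal among all such polynomials). Assume in addition that the function t ↦ e^{−int/2}·P(e^{it}) is real-valued for all t ∈ ℝ. If t₁ < t₂ are real numbers with t₂ − t₁ ≤ 2π such that P(e^{it₁}) = P(e^{it₂}) = 0 and P(e^{it}) ≠ 0 for all t ∈ (t₁,t₂), then there exists y ∈ (t₁,t₂) with e^{iy} ∈ E_T and |P(e^{iy})| = 1. -/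
open Complex Polynomial

private lemma exp_sub_exp (t s : ℝ) :
    Complex.exp (↑t * I) - Complex.exp (↑s * I) =
      2 * I * (↑(Real.sin ((t - s)/2)) : ℂ) * Complex.exp ((↑((t + s)/2) : ℂ) * I) := by
  rw [Complex.ofReal_sin, Complex.sin]
  have e1 : Complex.exp ((↑((t-s)/2) : ℂ) * I) * Complex.exp ((↑((t+s)/2) : ℂ) * I)
      = Complex.exp (↑t * I) := by
    rw [← Complex.exp_add]; congr 1; push_cast; ring
  have e2 : Complex.exp (-(↑((t-s)/2) : ℂ) * I) * Complex.exp ((↑((t+s)/2) : ℂ) * I)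
      = Complex.exp (↑s * I) := by
    rw [← Complex.exp_add]; congr 1; push_cast; ring
  have h := Complex.I_mul_I
  linear_combination (-1 : ℂ) * e1 + e2 -
    ((Complex.exp (-(↑((t-s)/2) : ℂ) * I) - Complex.exp ((↑((t-s)/2) : ℂ) * I)) *
      Complex.exp ((↑((t+s)/2) : ℂ) * I)) * h

private lemma exp_eq_exp_real (t s : ℝ) :
    Complex.exp (↑t * I) = Complex.exp (↑s * I) ↔ ∃ k : ℤ, t = s + 2 * Real.pi * k := by
  rw [Complex.exp_eq_exp_iff_exists_int]
  constructor
  · rintro ⟨k, hk⟩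
    refine ⟨k, ?_⟩
    have h := congrArg Complex.im hk
    simp [Complex.add_im, Complex.mul_im] at h
    linarith [h]
  · rintro ⟨k, hk⟩
    exact ⟨k, by rw [hk]; push_cast; ring⟩

private lemma isClosed_pre (g : ℕ) (a b : Fin g → ℝ) :
    IsClosed {t : ℝ | Complex.exp (↑t * I) ∈ ETset g a b} := by
  have hset : {t : ℝ | Complex.exp (↑t * I) ∈ ETset g a b} =
      (⋃ j, ⋃ k : ℤ, Set.Ioo (a j + 2*Real.pi*k) (b j + 2*Real.pi*k))ᶜ := by
    ext t
    simp only [ETset, Set.mem_setOf_eq, Set.mem_diff, Set.mem_compl_iff, Set.mem_iUnion,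
      Set.mem_image, Set.mem_Ioo]
    constructor
    · rintro ⟨-, h2⟩ ⟨j, k, hk1, hk2⟩
      exact h2 ⟨j, t - 2*Real.pi*k, ⟨by linarith, by linarith⟩,
        ((exp_eq_exp_real t _).mpr ⟨k, by ring⟩).symm⟩
    · intro h
      refine ⟨by simp [Complex.norm_exp], ?_⟩
      rintro ⟨j, s, hs, hst⟩
      obtain ⟨k, hk⟩ := (exp_eq_exp_real t s).mp hst.symm
      exact h ⟨j, k, by linarith [hs.1], by linarith [hs.2]⟩
  rw [hset]
  exact (isOpen_iUnion fun j => isOpen_iUnion fun k => isOpen_Ioo).isClosed_compl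

private lemma exists_rep (c : ℝ) {ζ : ℂ} (hζ : ‖ζ‖ = 1) :
    ∃ t ∈ Set.Ioc c (c + 2*Real.pi), Complex.exp (↑t * I) = ζ := by
  have h2π : (0:ℝ) < 2*Real.pi := by positivity
  refine ⟨toIocMod h2π c ζ.arg, toIocMod_mem_Ioc h2π c _, ?_⟩
  have hk : Complex.exp (↑(toIocMod h2π c ζ.arg) * I) = Complex.exp (↑ζ.arg * I) := by
    refine (exp_eq_exp_real _ _).mpr ⟨-(toIocDiv h2π c ζ.arg), ?_⟩
    rw [toIocMod, zsmul_eq_mul]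
    push_cast
    ring
  rw [hk]
  conv_rhs => rw [← Complex.norm_mul_exp_arg_mul_I ζ]
  rw [hζ]
  simp

set_option maxHeartbeats 2000000 in
/-- For an extremal polynomial `P` of the Ahlfors problem on `E_T` such that
`t ↦ e^{−int/2}·P(e^{it})` is real-valued, between any two consecutive zeros of
`t ↦ P(e^{it})` there is `y` with `e^{iy} ∈ E_T` and `|P(e^{iy})| = 1`. -/
theorem stmt9 (g : ℕ) (hg : 1 ≤ g) (a b : Fin g → ℝ)
    (hpos : ∀ j, 0 < a j) (hab : ∀ j, a j < b j)
    (hord : ∀ j k : Fin g, j < k → b j < a k) (hlast : ∀ j, b j < 2 * Real.pi)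
    (n : ℕ) (hn : 1 ≤ n)
    (ζ₀ : ℂ) (hζ₀T : ‖ζ₀‖ = 1) (hζ₀ : ζ₀ ∉ ETset g a b)
    (P : Polynomial ℂ) (hdeg : P.natDegree ≤ n)
    (hbd : ∀ ζ ∈ ETset g a b, ‖P.eval ζ‖ ≤ 1)
    (hzero : P.eval ζ₀ = 0)
    (hext : ∀ Q : Polynomial ℂ, Q.natDegree ≤ n →
      (∀ ζ ∈ ETset g a b, ‖Q.eval ζ‖ ≤ 1) → Q.eval ζ₀ = 0 →
      ‖(Polynomial.derivative Q).eval ζ₀‖ ≤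
        ‖(Polynomial.derivative P).eval ζ₀‖)
    (hreal : ∀ t : ℝ,
      (Complex.exp (-((n : ℂ) * t * Complex.I) / 2) *
        P.eval (Complex.exp (t * Complex.I))).im = 0)
    (t₁ t₂ : ℝ) (hlt : t₁ < t₂) (hper : t₂ - t₁ ≤ 2 * Real.pi)
    (h₁ : P.eval (Complex.exp (t₁ * Complex.I)) = 0)
    (h₂ : P.eval (Complex.exp (t₂ * Complex.I)) = 0)
    (hne : ∀ t ∈ Set.Ioo t₁ t₂, P.eval (Complex.exp (t * Complex.I)) ≠ 0) :
    ∃ y ∈ Set.Ioo t₁ t₂, Complex.exp (y * Complex.I) ∈ ETset g a b ∧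
      ‖P.eval (Complex.exp (y * Complex.I))‖ = 1 := by
  by_contra hcon
  push_neg at hcon
  have h2π : (0:ℝ) < 2*Real.pi := by positivity
  -- |P'(ζ₀)| ≥ 1/2
  have hP'half : (1:ℝ)/2 ≤ ‖(derivative P).eval ζ₀‖ := by
    have h1 : (Polynomial.C (1/2 : ℂ) * (X - Polynomial.C ζ₀)).natDegree ≤ n := by
      refine le_trans (natDegree_C_mul_le _ _) ?_
      rw [natDegree_X_sub_C]; exact hn
    have h2 : ∀ ζ ∈ ETset g a b,
        ‖(Polynomial.C (1/2:ℂ) * (X - Polynomial.C ζ₀)).eval ζ‖ ≤ 1 := by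
      intro ζ hζ
      have hζ1 : ‖ζ‖ = 1 := hζ.1
      have hsub : ‖ζ - ζ₀‖ ≤ 2 := by
        have := norm_sub_le ζ ζ₀
        rw [hζ₀T, hζ1] at this
        linarith
      have habs12 : ‖(1/2 : ℂ)‖ = 1/2 := by
        rw [norm_div, norm_one, Complex.norm_two]
      rw [eval_mul, eval_C, eval_sub, eval_X, eval_C, norm_mul, habs12]
      linarith
    have h3 : (Polynomial.C (1/2:ℂ) * (X - Polynomial.C ζ₀)).eval ζ₀ = 0 := by simp
    have h4 := hext _ h1 h2 h3
    rw [derivative_C_mul, derivative_X_sub_C] at h4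
    simp only [eval_mul, eval_C, eval_one, mul_one, norm_div, norm_one, Complex.norm_two] at h4
    exact h4
  have hP'pos : (0:ℝ) < ‖(derivative P).eval ζ₀‖ :=
    lt_of_lt_of_le (by norm_num) hP'half
  set pre : Set ℝ := {t : ℝ | Complex.exp (↑t * I) ∈ ETset g a b} with hpre
  have hpreclosed : IsClosed pre := isClosed_pre g a b
  have hrep : ∀ ζ ∈ ETset g a b,
      ∃ t, (t ∈ Set.Icc t₁ (t₁ + 2*Real.pi) ∧ t ∈ pre) ∧ Complex.exp (↑t * I) = ζ := by
    intro ζ hζ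
    obtain ⟨t, ht, hte⟩ := exists_rep t₁ hζ.1
    refine ⟨t, ⟨Set.Ioc_subset_Icc_self ht, ?_⟩, hte⟩
    rw [hpre]; simp only [Set.mem_setOf_eq]; rw [hte]; exact hζ
  have hcomp : IsCompact (Set.Icc t₁ (t₁+2*Real.pi) ∩ pre) :=
    isCompact_Icc.inter_right hpreclosed
  have hcontf : ∀ R : Polynomial ℂ,
      Continuous fun t : ℝ => ‖R.eval (Complex.exp (↑t * I))‖ := by
    intro R
    exact continuous_norm.comp (R.continuous.comp
      (Complex.continuous_exp.comp (Complex.continuous_ofReal.mul continuous_const)))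
  -- final contradiction machine
  have final : ∀ Q : Polynomial ℂ, Q.natDegree ≤ n → Q.eval ζ₀ = 0 →
      ((derivative Q).eval ζ₀ = (derivative P).eval ζ₀) →
      (∀ t ∈ Set.Icc t₁ (t₁+2*Real.pi) ∩ pre,
        ‖Q.eval (Complex.exp (↑t * I))‖ < 1) → False := by
    intro Q hQdeg hQ0 hQder hQlt
    rcases (Set.Icc t₁ (t₁+2*Real.pi) ∩ pre).eq_empty_or_nonempty with hK | hK
    · have hb2 : ∀ ζ ∈ ETset g a b, ‖(Polynomial.C (2:ℂ) * Q).eval ζ‖ ≤ 1 := by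
        intro ζ hζ
        obtain ⟨t, htK, -⟩ := hrep ζ hζ
        exact (Set.eq_empty_iff_forall_notMem.mp hK t htK).elim
      have h4 := hext _ (le_trans (natDegree_C_mul_le _ _) hQdeg) hb2 (by simp [hQ0])
      rw [derivative_C_mul] at h4
      rw [eval_mul, eval_C, norm_mul, Complex.norm_two, hQder] at h4
      linarith
    · obtain ⟨t₀, ht₀, hmax'⟩ := hcomp.exists_isMaxOn hK ((hcontf Q).continuousOn)
      have hmax := isMaxOn_iff.mp hmax'
      set MQ := ‖Q.eval (Complex.exp (↑t₀ * I))‖ with hMQ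
      have hMQ1 : MQ < 1 := hQlt t₀ ht₀
      have hMQ0 : 0 ≤ MQ := norm_nonneg _
      set lam : ℝ := 2/(1+MQ) with hlam
      have hlam1 : 1 < lam := by
        rw [hlam, lt_div_iff₀ (by linarith)]; linarith
      have hb2 : ∀ ζ ∈ ETset g a b, ‖(Polynomial.C (lam:ℂ) * Q).eval ζ‖ ≤ 1 := by
        intro ζ hζ
        obtain ⟨t, htK, hte⟩ := hrep ζ hζ
        rw [← hte, eval_mul, eval_C, norm_mul]
        have h5 : ‖(lam:ℂ)‖ = lam := by
          rw [Complex.norm_real, Real.norm_eq_abs]; exact abs_of_pos (by linarith)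
        rw [h5]
        have h6 : ‖Q.eval (Complex.exp (↑t * I))‖ ≤ MQ := hmax t htK
        have h7 : lam * MQ ≤ 1 := by
          rw [hlam, div_mul_eq_mul_div, div_le_one (by linarith)]; linarith
        nlinarith [h6, norm_nonneg (Q.eval (Complex.exp (↑t * I)))]
      have h4 := hext _ (le_trans (natDegree_C_mul_le _ _) hQdeg) hb2 (by simp [hQ0])
      rw [derivative_C_mul] at h4
      rw [eval_mul, eval_C, norm_mul, hQder] at h4
      have h5 : ‖(lam:ℂ)‖ = lam := by
        rw [Complex.norm_real, Real.norm_eq_abs]; exact abs_of_pos (by linarith)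
      rw [h5] at h4
      nlinarith [hP'pos]
  have ht₂le : t₂ ≤ t₁ + 2*Real.pi := by linarith
  have harc : ∀ t, t ∈ Set.Icc t₁ t₂ → t ∈ pre →
      ‖P.eval (Complex.exp (↑t * I))‖ < 1 := by
    intro t ht htp
    rcases eq_or_lt_of_le ht.1 with h | h
    · rw [← h, h₁]; simp
    rcases eq_or_lt_of_le ht.2 with h' | h'
    · rw [h', h₂]; simp
    · exact lt_of_le_of_ne (hbd _ htp) (hcon t ⟨h, h'⟩ htp)
  rcases eq_or_lt_of_le ht₂le with hcase | hcase
  · -- t₂ = t₁ + 2π : the whole circle is covered by the closed arc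
    refine final P hdeg hzero rfl ?_
    rintro t ⟨htI, htp⟩
    exact harc t ⟨htI.1, by rw [hcase]; exact htI.2⟩ htp
  · -- main case
    have hαβ : Complex.exp (↑t₁ * I) ≠ Complex.exp (↑t₂ * I) := by
      intro hEq
      obtain ⟨k, hk⟩ := (exp_eq_exp_real t₁ t₂).mp hEq
      rcases lt_trichotomy k 0 with hk0 | hk0 | hk0
      · have hk1 : (k:ℝ) ≤ -1 := by
          have hk2 : k ≤ -1 := by omega
          exact_mod_cast hk2
        nlinarith [Real.pi_pos]
      · rw [hk0] at hk; push_cast at hk; linarith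
      · have hk1 : (1:ℝ) ≤ (k:ℝ) := by exact_mod_cast hk0
        nlinarith [Real.pi_pos]
    have hPne : P ≠ 0 := by
      intro h
      rw [h] at hP'pos
      simp at hP'pos
    obtain ⟨P₂, hfac⟩ : ∃ P₂ : Polynomial ℂ,
        P = (X - Polynomial.C (Complex.exp (↑t₁ * I))) *
            ((X - Polynomial.C (Complex.exp (↑t₂ * I))) * P₂) := by
      obtain ⟨P₁, hP₁⟩ :=
        (dvd_iff_isRoot.mpr h₁ : (X - Polynomial.C (Complex.exp (↑t₁*I))) ∣ P)
      have hroot : P₁.eval (Complex.exp (↑t₂ * I)) = 0 := by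
        have h2' := h₂
        rw [hP₁, eval_mul, eval_sub, eval_X, eval_C] at h2'
        rcases mul_eq_zero.mp h2' with h | h
        · exact absurd (sub_eq_zero.mp h).symm hαβ
        · exact h
      obtain ⟨P₂, hP₂⟩ := dvd_iff_isRoot.mpr hroot
      exact ⟨P₂, by rw [hP₁, hP₂]⟩
    have hP₂ne : P₂ ≠ 0 := by
      rintro rfl
      rw [mul_zero, mul_zero] at hfac
      exact hPne hfac
    have hdeg₂ : P₂.natDegree + 2 ≤ n := by
      have h5 : P.natDegree = P₂.natDegree + 2 := by
        rw [hfac, natDegree_mul (X_sub_C_ne_zero _)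
          (mul_ne_zero (X_sub_C_ne_zero _) hP₂ne),
          natDegree_mul (X_sub_C_ne_zero _) hP₂ne,
          natDegree_X_sub_C, natDegree_X_sub_C]
        ring
      omega
    set τ : ℝ := ζ₀.arg with hτ
    have hζ₀τ : Complex.exp (↑τ * I) = ζ₀ := by
      conv_rhs => rw [← Complex.norm_mul_exp_arg_mul_I ζ₀]
      rw [hζ₀T]; simp [hτ]
    set m : ℝ := (t₁+t₂)/2 with hm
    obtain ⟨tc, -, hCb'⟩ := isCompact_Icc.exists_isMaxOn
      (⟨t₁, Set.left_mem_Icc.mpr (by linarith)⟩ : (Set.Icc t₁ (t₁+2*Real.pi)).Nonempty)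
      ((hcontf P₂).continuousOn)
    have hCb := isMaxOn_iff.mp hCb'
    set Cb : ℝ := 4 * ‖P₂.eval (Complex.exp (↑tc * I))‖ + 1 with hCbdef
    have hCb1 : 1 ≤ Cb := by
      have := norm_nonneg (P₂.eval (Complex.exp (↑tc * I))); rw [hCbdef]; linarith
    have hCbb : ∀ t ∈ Set.Icc t₁ (t₁+2*Real.pi),
        4 * ‖P₂.eval (Complex.exp (↑t * I))‖ ≤ Cb - 1 := by
      intro t ht; have := hCb t ht; rw [hCbdef]; linarith
    obtain ⟨M, hM0, hM1, hMb⟩ : ∃ M : ℝ, 0 ≤ M ∧ M < 1 ∧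
        ∀ t, t ∈ Set.Icc t₁ t₂ → t ∈ pre →
          ‖P.eval (Complex.exp (↑t * I))‖ ≤ M := by
      rcases (Set.Icc t₁ t₂ ∩ pre).eq_empty_or_nonempty with hA | hA
      · exact ⟨0, le_refl _, one_pos, fun t ht htp =>
          (Set.eq_empty_iff_forall_notMem.mp hA t ⟨ht, htp⟩).elim⟩
      · obtain ⟨t₀, ht₀, hmax'⟩ := (isCompact_Icc.inter_right hpreclosed).exists_isMaxOn
          hA ((hcontf P).continuousOn)
        have hmax := isMaxOn_iff.mp hmax'
        exact ⟨_, norm_nonneg _, harc t₀ ht₀.1 ht₀.2,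
          fun t ht htp => hmax t ⟨ht, htp⟩⟩
    have hCbpos : (0:ℝ) < Cb := by linarith
    set ε : ℝ := min ((1-M)/(2*Cb)) (1/(2*Cb)) with hεdef
    have hε0 : 0 < ε :=
      lt_min (div_pos (by linarith) (by linarith)) (div_pos one_pos (by linarith))
    have hε1 : ε * Cb ≤ (1-M)/2 := by
      have h5 := min_le_left ((1-M)/(2*Cb)) (1/(2*Cb))
      rw [← hεdef] at h5
      have h6 : ε * Cb ≤ ((1-M)/(2*Cb)) * Cb := by nlinarith
      calc ε * Cb ≤ ((1-M)/(2*Cb)) * Cb := h6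
        _ = (1-M)/2 := by field_simp
    have hε2 : ε * Cb ≤ 1/2 := by
      have h5 := min_le_right ((1-M)/(2*Cb)) (1/(2*Cb))
      rw [← hεdef] at h5
      have h6 : ε * Cb ≤ (1/(2*Cb)) * Cb := by nlinarith
      calc ε * Cb ≤ (1/(2*Cb)) * Cb := h6
        _ = 1/2 := by field_simp; try ring
    set cc : ℂ := -(↑ε) * Complex.exp (↑(m - τ) * I) with hcc
    set Q : Polynomial ℂ :=
      P + Polynomial.C cc * ((X - Polynomial.C ζ₀) * ((X - Polynomial.C ζ₀) * P₂)) with hQ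
    -- evaluation identities
    have hPeval : ∀ t : ℝ, P.eval (Complex.exp (↑t * I)) =
        (((-4 * (Real.sin ((t-t₁)/2) * Real.sin ((t-t₂)/2)) : ℝ)) : ℂ) *
          Complex.exp (↑(t + m) * I) * P₂.eval (Complex.exp (↑t * I)) := by
      intro t
      conv_lhs => rw [hfac]
      rw [eval_mul, eval_mul, eval_sub, eval_sub, eval_X, eval_C, eval_C]
      rw [exp_sub_exp t t₁, exp_sub_exp t t₂]
      rw [show ((-4 * (Real.sin ((t-t₁)/2) * Real.sin ((t-t₂)/2)) : ℝ) : ℂ) =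
        -4 * ((Real.sin ((t-t₁)/2) : ℂ) * (Real.sin ((t-t₂)/2) : ℂ)) from by push_cast; ring]
      have e1 : Complex.exp ((↑((t+t₁)/2) : ℂ) * I) * Complex.exp ((↑((t+t₂)/2) : ℂ) * I)
          = Complex.exp (↑(t+m) * I) := by
        rw [← Complex.exp_add]; congr 1; rw [hm]; push_cast; ring
      have h := Complex.I_mul_I
      linear_combination (4*Complex.I*Complex.I*(Real.sin ((t-t₁)/2) : ℂ)*
          (Real.sin ((t-t₂)/2) : ℂ)*(P₂.eval (Complex.exp (↑t * I))))*e1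
        + (4*Complex.exp (↑(t+m) * I)*(P₂.eval (Complex.exp (↑t * I)))*
          (Real.sin ((t-t₁)/2) : ℂ)*(Real.sin ((t-t₂)/2) : ℂ))*h
    have hQeval : ∀ t : ℝ, Q.eval (Complex.exp (↑t * I)) =
        ((( -4 * (Real.sin ((t-t₁)/2) * Real.sin ((t-t₂)/2) - ε * Real.sin ((t-τ)/2)^2) : ℝ)) : ℂ) *
          Complex.exp (↑(t + m) * I) * P₂.eval (Complex.exp (↑t * I)) := by
      intro t
      rw [hQ, eval_add, eval_mul, eval_C, eval_mul, eval_mul, eval_sub, eval_X, eval_C]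
      conv_lhs => rw [hfac]
      rw [eval_mul, eval_mul, eval_sub, eval_sub, eval_X, eval_C, eval_C]
      rw [← hζ₀τ]
      rw [exp_sub_exp t t₁, exp_sub_exp t t₂, exp_sub_exp t τ]
      rw [hcc]
      rw [show ((-4 * (Real.sin ((t-t₁)/2) * Real.sin ((t-t₂)/2)
          - ε * Real.sin ((t-τ)/2)^2) : ℝ) : ℂ) =
        -4 * ((Real.sin ((t-t₁)/2) : ℂ) * (Real.sin ((t-t₂)/2) : ℂ)
          - (ε:ℂ) * (Real.sin ((t-τ)/2) : ℂ)^2) from by push_cast; ring]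
      have e1 : Complex.exp ((↑((t+t₁)/2) : ℂ) * I) * Complex.exp ((↑((t+t₂)/2) : ℂ) * I)
          = Complex.exp (↑(t+m) * I) := by
        rw [← Complex.exp_add]; congr 1; rw [hm]; push_cast; ring
      have e2 : Complex.exp ((↑((t+τ)/2) : ℂ) * I) * Complex.exp ((↑((t+τ)/2) : ℂ) * I) *
          Complex.exp (↑(m-τ) * I) = Complex.exp (↑(t+m) * I) := by
        rw [← Complex.exp_add, ← Complex.exp_add]; congr 1; push_cast; ring
      have h := Complex.I_mul_I
      linear_combination (4*Complex.I*Complex.I*(Real.sin ((t-t₁)/2) : ℂ)*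
          (Real.sin ((t-t₂)/2) : ℂ)*(P₂.eval (Complex.exp (↑t * I))))*e1
        - (4*Complex.I*Complex.I*(ε:ℂ)*(Real.sin ((t-τ)/2) : ℂ)^2*
          (P₂.eval (Complex.exp (↑t * I))))*e2
        + (4*Complex.exp (↑(t+m) * I)*(P₂.eval (Complex.exp (↑t * I)))*
          ((Real.sin ((t-t₁)/2) : ℂ)*(Real.sin ((t-t₂)/2) : ℂ)
            - (ε:ℂ)*(Real.sin ((t-τ)/2) : ℂ)^2))*h
    refine final Q ?_ ?_ ?_ ?_
    · -- degree
      refine le_trans (natDegree_add_le _ _) (max_le hdeg ?_)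
      refine le_trans (natDegree_C_mul_le _ _) ?_
      refine le_trans natDegree_mul_le ?_
      have h6 : ((X - Polynomial.C ζ₀) * P₂).natDegree ≤ 1 + P₂.natDegree := by
        refine le_trans natDegree_mul_le ?_
        rw [natDegree_X_sub_C]
      have h7 : (X - Polynomial.C ζ₀).natDegree = 1 := natDegree_X_sub_C _
      omega
    · simp [hQ, hzero]
    · rw [hQ, derivative_add, derivative_C_mul, eval_add, eval_mul, eval_C]
      have h6 : (derivative ((X - Polynomial.C ζ₀) * ((X - Polynomial.C ζ₀) * P₂))).eval ζ₀
          = 0 := by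
        simp [derivative_mul, derivative_X_sub_C]
      rw [h6, mul_zero, add_zero]
    · rintro t ⟨htI, htp⟩
      have hx := hCbb t htI
      have hx0 : 0 ≤ ‖P₂.eval (Complex.exp (↑t * I))‖ := norm_nonneg _
      by_cases ht₂' : t ≤ t₂
      · -- closed arc part: use M
        have hPb := hMb t ⟨htI.1, ht₂'⟩ htp
        have hQsplit : Q.eval (Complex.exp (↑t * I)) = P.eval (Complex.exp (↑t * I)) +
            cc * ((Complex.exp (↑t * I) - ζ₀) * ((Complex.exp (↑t * I) - ζ₀) *
              P₂.eval (Complex.exp (↑t * I)))) := by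
          rw [hQ]; simp [eval_add, eval_mul, eval_sub, eval_X, eval_C]
        have hzz : ‖Complex.exp (↑t * I) - ζ₀‖ ≤ 2 := by
          have h8 := norm_sub_le (Complex.exp (↑t * I)) ζ₀
          rw [hζ₀T] at h8
          simp only [Complex.norm_exp_ofReal_mul_I] at h8
          linarith
        have hccabs : ‖cc‖ = ε := by
          rw [hcc, norm_mul, norm_neg, Complex.norm_real, Real.norm_eq_abs,
            Complex.norm_exp_ofReal_mul_I, _root_.abs_of_pos hε0, mul_one]
        rw [hQsplit]
        refine lt_of_le_of_lt (norm_add_le _ _) ?_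
        simp only [norm_mul, norm_neg, Complex.norm_real, Complex.norm_exp_ofReal_mul_I]
        rw [hccabs]
        have hd0 : 0 ≤ ‖Complex.exp (↑t * I) - ζ₀‖ := norm_nonneg _
        have h9 : ‖Complex.exp (↑t * I) - ζ₀‖ *
            (‖Complex.exp (↑t * I) - ζ₀‖ *
              ‖P₂.eval (Complex.exp (↑t * I))‖) ≤
            4 * ‖P₂.eval (Complex.exp (↑t * I))‖ := by
          nlinarith [mul_le_mul_of_nonneg_right hzz hx0, mul_nonneg hd0 hx0]
        have h10 : ε * (‖Complex.exp (↑t * I) - ζ₀‖ *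
            (‖Complex.exp (↑t * I) - ζ₀‖ *
              ‖P₂.eval (Complex.exp (↑t * I))‖)) ≤
            ε * (4 * ‖P₂.eval (Complex.exp (↑t * I))‖) := by
          apply mul_le_mul_of_nonneg_left ?_ hε0.le
          nlinarith [mul_le_mul_of_nonneg_right hzz hx0, mul_nonneg hd0 hx0]
        have h11 : ε * (4 * ‖P₂.eval (Complex.exp (↑t * I))‖) ≤ ε * (Cb - 1) :=
          mul_le_mul_of_nonneg_left hx hε0.le
        have h12 : ε * (Cb - 1) = ε * Cb - ε := by ring
        nlinarith [hε0, hε1, hM1, hPb]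
      · -- off-arc part
        push_neg at ht₂'
        have hs₁0 : 0 ≤ Real.sin ((t-t₁)/2) :=
          Real.sin_nonneg_of_nonneg_of_le_pi (by linarith) (by
            have := htI.2; linarith)
        have hs₂0 : 0 ≤ Real.sin ((t-t₂)/2) :=
          Real.sin_nonneg_of_nonneg_of_le_pi (by linarith) (by
            have := htI.2; linarith)
        have hs₀0 : (0:ℝ) ≤ Real.sin ((t-τ)/2)^2 := sq_nonneg _
        have hs₀1 : Real.sin ((t-τ)/2)^2 ≤ 1 := Real.sin_sq_le_one _
        have hQab : ‖Q.eval (Complex.exp (↑t * I))‖ =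
            4 * ‖P₂.eval (Complex.exp (↑t * I))‖ *
              |Real.sin ((t-t₁)/2) * Real.sin ((t-t₂)/2) - ε * Real.sin ((t-τ)/2)^2| := by
          rw [hQeval t, norm_mul, norm_mul, Complex.norm_real, Real.norm_eq_abs, Complex.norm_exp_ofReal_mul_I,
            _root_.abs_mul]
          rw [show |(-4:ℝ)| = 4 from by norm_num]
          ring
        have hPab : ‖P.eval (Complex.exp (↑t * I))‖ =
            4 * ‖P₂.eval (Complex.exp (↑t * I))‖ *
              (Real.sin ((t-t₁)/2) * Real.sin ((t-t₂)/2)) := by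
          rw [hPeval t, norm_mul, norm_mul, Complex.norm_real, Real.norm_eq_abs, Complex.norm_exp_ofReal_mul_I,
            _root_.abs_mul]
          rw [show |(-4:ℝ)| = 4 from by norm_num,
            _root_.abs_of_nonneg (mul_nonneg hs₁0 hs₂0)]
          ring
        have hP1 : 4 * ‖P₂.eval (Complex.exp (↑t * I))‖ *
            (Real.sin ((t-t₁)/2) * Real.sin ((t-t₂)/2)) ≤ 1 := by
          rw [← hPab]; exact hbd _ htp
        rw [hQab]
        set x := 4 * ‖P₂.eval (Complex.exp (↑t * I))‖ with hxdef
        set s₁ := Real.sin ((t-t₁)/2)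
        set s₂ := Real.sin ((t-t₂)/2)
        set s₀2 := Real.sin ((t-τ)/2)^2
        rcases le_or_gt (ε * s₀2) (s₁ * s₂) with hc2 | hc2
        · by_contra hge
          push_neg at hge
          rw [_root_.abs_of_nonneg (by linarith)] at hge
          have h7 : x * (ε * s₀2) ≤ 0 := by nlinarith
          have h8 : x * s₀2 = 0 := by nlinarith [mul_nonneg (by positivity : (0:ℝ) ≤ x) hs₀0]
          rcases mul_eq_zero.mp h8 with h9 | h9
          · rw [h9] at hge; simp at hge; linarith
          · have hs0 : Real.sin ((t-τ)/2) = 0 := by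
              have := sq_eq_zero_iff.mp h9
              exact this
            obtain ⟨k, hk⟩ := Real.sin_eq_zero_iff.mp hs0
            have hzζ : Complex.exp (↑t * I) = ζ₀ := by
              rw [← hζ₀τ]
              exact (exp_eq_exp_real t τ).mpr ⟨k, by linear_combination (-2)*hk⟩
            have h10 : ‖P.eval (Complex.exp (↑t * I))‖ = 0 := by
              rw [hzζ, hzero]; simp
            rw [hPab] at h10
            nlinarith [hge, h10]
        · have h7 : |s₁ * s₂ - ε * s₀2| ≤ ε := by
            rw [_root_.abs_of_neg (by linarith)]
            nlinarith [mul_nonneg hs₁0 hs₂0]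
          have h8 : x ≤ Cb := by rw [hxdef]; linarith
          calc x * |s₁ * s₂ - ε * s₀2| ≤ Cb * ε := by
                nlinarith [abs_nonneg (s₁ * s₂ - ε * s₀2), hε0]
            _ ≤ 1/2 := by linarith [hε2]
            _ < 1 := by norm_num
end

section
/- Fix g ≥ 0 and real numbers b₀ < a₁ < b₁ < ⋯ < a_g < b_g < a₀, points x_j ∈ (a_j,b_j) for j = 1,…,g and x₀ ∈ (a₀,∞), and z ∈ ℂ with Im z > 0. Put T(z) = (z−a₀)(z−b₀)·∏_{j=1}^g (z−a_j)(z−b_j) and U(z) = ∏_{j=0}^g (z−x_j). Then T(z)/U(z)² is a negative real number if and only if ∫_{a₀}^{x₀} dt/|t−z|² + ∑_{j=1}^g ∫_{a_j}^{x_j} dt/|t−z|² = ∫_{x₀}^{∞} dt/|t−z|² + ∫_{−∞}^{b₀} dt/|t−z|² + ∑_{j=1}^g ∫_{x_j}^{b_j} dt/|t−z|². (Equivalently: a holomorphic branch of √T(z)/U(z) on the upper half-plane takes a purely imaginary value at z exactly when the harmonic measures at z of the two halves into which the points x_j divide the gaps coincide.) -/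
open Complex MeasureTheory intervalIntegral


lemma hexp_real (θ : ℝ) : Complex.exp ((θ:ℂ) * Complex.I)
    = ((Real.cos θ : ℝ) : ℂ) + ((Real.sin θ : ℝ) : ℂ) * Complex.I := by
  rw [Complex.exp_mul_I, Complex.ofReal_cos, Complex.ofReal_sin]

lemma factor_polar (z : ℂ) (hz : 0 < z.im) (t : ℝ) :
    z - (t : ℂ) = ((z.im * Real.sqrt (1 + ((t - z.re)/z.im)^2) : ℝ) : ℂ) *
      Complex.exp ((↑(Real.pi/2 + Real.arctan ((t - z.re)/z.im)) : ℂ) * Complex.I) := by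
  have hy : z.im ≠ 0 := ne_of_gt hz
  set u := (t - z.re)/z.im with hu
  have hs : (0:ℝ) < Real.sqrt (1 + u^2) := Real.sqrt_pos.2 (by positivity)
  rw [hexp_real]
  apply Complex.ext <;>
    simp [Real.cos_add, Real.sin_add, Real.sin_arctan, Real.cos_arctan]
  · rw [hu]; field_simp; ring
  · field_simp

lemma polar_mul (r1 r2 t1 t2 : ℝ) :
    ((r1:ℂ) * Complex.exp ((t1:ℂ) * Complex.I)) * ((r2:ℂ) * Complex.exp ((t2:ℂ) * Complex.I))
      = ((r1*r2 : ℝ):ℂ) * Complex.exp ((↑(t1+t2):ℂ) * Complex.I) := by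
  push_cast
  rw [add_mul, Complex.exp_add]
  ring

lemma polar_prod {n : ℕ} (r t : Fin n → ℝ) :
    (∏ j, ((r j : ℂ) * Complex.exp ((t j : ℂ) * Complex.I)))
      = ((∏ j, r j : ℝ) : ℂ) * Complex.exp ((↑(∑ j, t j) : ℂ) * Complex.I) := by
  rw [Finset.prod_mul_distrib, Complex.ofReal_prod, Complex.ofReal_sum, Finset.sum_mul,
    Complex.exp_sum]

lemma polar_div (A B al be : ℝ) (hB : B ≠ 0) :
    ((A:ℂ) * Complex.exp ((al:ℂ) * Complex.I)) / ((B:ℂ) * Complex.exp ((be:ℂ) * Complex.I))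
      = ((A/B : ℝ):ℂ) * Complex.exp ((↑(al-be):ℂ) * Complex.I) := by
  rw [div_eq_iff (by simp [hB, Complex.exp_ne_zero]), polar_mul]
  rw [div_mul_cancel₀ _ hB, sub_add_cancel]

-- negativity criterion
lemma polar_neg_iff (K D : ℝ) (hK : 0 < K) :
    (∃ r : ℝ, r < 0 ∧ (K:ℂ) * Complex.exp ((D:ℂ) * Complex.I) = (r:ℂ)) ↔
      ∃ n : ℤ, D = n * (2*Real.pi) - Real.pi := by
  constructor
  · rintro ⟨r, hr, h⟩
    have hKne : (K:ℂ) ≠ 0 := by exact_mod_cast ne_of_gt hK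
    have he : Complex.exp ((D:ℂ) * Complex.I) = ((r/K : ℝ):ℂ) := by
      field_simp at h ⊢
      rw [mul_comm] at h
      rw [Complex.ofReal_div, eq_div_iff hKne]; exact h
    have habs : |r/K| = 1 := by
      have := Complex.norm_exp_ofReal_mul_I D
      rw [he] at this
      rw [abs_div]
      simpa using this
    have hneg : r/K < 0 := div_neg_of_neg_of_pos hr hK
    have hrk : r/K = -1 := by
      rcases abs_eq (by norm_num : (0:ℝ) ≤ 1) |>.1 habs with h1 | h1 <;> linarith
    rw [hrk] at he
    have h1 : Complex.exp ((↑(D + Real.pi):ℂ) * Complex.I) = 1 := by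
      push_cast
      rw [add_mul, Complex.exp_add, he, Complex.exp_pi_mul_I]
      norm_num
    rcases Complex.exp_eq_one_iff.1 h1 with ⟨n, hn⟩
    refine ⟨n, ?_⟩
    have h2 : ((D + Real.pi : ℝ):ℂ) * Complex.I = ((n * (2*Real.pi) : ℝ):ℂ) * Complex.I := by
      rw [hn]; push_cast; ring
    have h3 := Complex.ofReal_inj.1 (mul_right_cancel₀ Complex.I_ne_zero h2)
    linarith
  · rintro ⟨n, hn⟩
    refine ⟨-K, by linarith, ?_⟩
    have : Complex.exp ((D:ℂ) * Complex.I) = -1 := by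
      rw [hn]
      push_cast
      rw [sub_mul, Complex.exp_sub, Complex.exp_pi_mul_I]
      have : Complex.exp ((n:ℂ) * (2*Real.pi) * Complex.I) = 1 :=
        Complex.exp_eq_one_iff.2 ⟨n, by push_cast; ring⟩
      rw [this]
      norm_num
    rw [this]
    push_cast
    ring

lemma abs_sq_eq (z : ℂ) (t : ℝ) : ‖(t:ℂ) - z‖ ^ 2 = (t - z.re)^2 + z.im^2 := by
  rw [Complex.sq_norm, Complex.normSq_apply]
  simp
  ring

lemma deriv_phi (z : ℂ) (hz : 0 < z.im) (t : ℝ) :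
    HasDerivAt (fun s : ℝ => Real.arctan ((s - z.re)/z.im) / z.im)
      (1 / ((t - z.re)^2 + z.im^2)) t := by
  have hy : z.im ≠ 0 := ne_of_gt hz
  have h1 : HasDerivAt (fun s : ℝ => (s - z.re)/z.im) (1/z.im) t := by
    simpa using ((hasDerivAt_id t).sub_const z.re).div_const z.im
  have h2 := (Real.hasDerivAt_arctan ((t - z.re)/z.im)).comp t h1
  have h3 := h2.div_const z.im
  refine h3.congr_deriv ?_
  field_simp
  ring

lemma integral_interval (z : ℂ) (hz : 0 < z.im) (p q : ℝ) :
    (∫ t in p..q, 1 / ‖(t:ℂ) - z‖ ^ 2)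
      = Real.arctan ((q - z.re)/z.im) / z.im - Real.arctan ((p - z.re)/z.im) / z.im := by
  have hcont : Continuous (fun t : ℝ => 1 / ((t - z.re)^2 + z.im^2)) := by
    apply continuous_const.div (by continuity)
    intro t
    positivity
  rw [intervalIntegral.integral_congr (g := fun t : ℝ => 1 / ((t - z.re)^2 + z.im^2))
    (fun t _ => by rw [abs_sq_eq])]
  exact intervalIntegral.integral_eq_sub_of_hasDerivAt (fun t _ => deriv_phi z hz t)
    (hcont.intervalIntegrable p q)

lemma tendsto_phi_top (z : ℂ) (hz : 0 < z.im) :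
    Filter.Tendsto (fun s : ℝ => Real.arctan ((s - z.re)/z.im) / z.im)
    Filter.atTop (nhds ((Real.pi/2) / z.im)) := by
  have h1 : Filter.Tendsto (fun s : ℝ => (s - z.re)/z.im) Filter.atTop Filter.atTop :=
    (Filter.tendsto_atTop_add_const_right _ _ Filter.tendsto_id).atTop_div_const hz
  exact (((Real.tendsto_arctan_atTop.mono_right nhdsWithin_le_nhds).comp h1).div_const z.im)

lemma tendsto_phi_bot (z : ℂ) (hz : 0 < z.im) :
    Filter.Tendsto (fun s : ℝ => Real.arctan ((s - z.re)/z.im) / z.im)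
    Filter.atBot (nhds ((-(Real.pi/2)) / z.im)) := by
  have h1 : Filter.Tendsto (fun s : ℝ => (s - z.re)/z.im) Filter.atBot Filter.atBot :=
    (Filter.tendsto_atBot_add_const_right _ _ Filter.tendsto_id).atBot_div_const hz
  exact (((Real.tendsto_arctan_atBot.mono_right nhdsWithin_le_nhds).comp h1).div_const z.im)

lemma integrable_pk (z : ℂ) (hz : 0 < z.im) :
    Integrable (fun t : ℝ => 1 / ((t - z.re)^2 + z.im^2)) := by
  have hy : z.im ≠ 0 := ne_of_gt hz
  have h0 : Integrable (fun x : ℝ => (1 + x^2)⁻¹) := integrable_inv_one_add_sq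
  have h1 : Integrable (fun x : ℝ => (1 + (x/z.im)^2)⁻¹) := h0.comp_div hy
  have h2 : Integrable (fun x : ℝ => (1 + ((x - z.re)/z.im)^2)⁻¹) := h1.comp_sub_right z.re
  have h3 := h2.const_mul ((z.im^2)⁻¹)
  refine h3.congr (Filter.Eventually.of_forall fun t => ?_)
  field_simp
  ring

lemma integral_Ioi' (z : ℂ) (hz : 0 < z.im) (p : ℝ) :
    (∫ t in Set.Ioi p, 1 / ‖(t:ℂ) - z‖ ^ 2)
      = (Real.pi/2) / z.im - Real.arctan ((p - z.re)/z.im) / z.im := by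
  rw [setIntegral_congr_fun measurableSet_Ioi
    (g := fun t : ℝ => 1 / ((t - z.re)^2 + z.im^2)) (fun t _ => by rw [abs_sq_eq])]
  exact MeasureTheory.integral_Ioi_of_hasDerivAt_of_nonneg'
    (fun t _ => deriv_phi z hz t) (fun t _ => by positivity) (tendsto_phi_top z hz)

lemma integral_Iic' (z : ℂ) (hz : 0 < z.im) (p : ℝ) :
    (∫ t in Set.Iic p, 1 / ‖(t:ℂ) - z‖ ^ 2)
      = Real.arctan ((p - z.re)/z.im) / z.im + (Real.pi/2) / z.im := by
  rw [setIntegral_congr_fun measurableSet_Iic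
    (g := fun t : ℝ => 1 / ((t - z.re)^2 + z.im^2)) (fun t _ => by rw [abs_sq_eq])]
  rw [MeasureTheory.integral_Iic_of_hasDerivAt_of_tendsto'
    (fun t _ => deriv_phi z hz t) ((integrable_pk z hz).integrableOn) (tendsto_phi_bot z hz)]
  ring

/-- For `z` in the upper half-plane and gap points `x_j ∈ (a_j,b_j)`, `x₀ ∈ (a₀,∞)`, the
value `T(z)/U(z)²` is a negative real number iff the harmonic-measure balance condition
`∫_{a₀}^{x₀} dt/|t−z|² + ∑_j ∫_{a_j}^{x_j} dt/|t−z|²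
  = ∫_{x₀}^{∞} dt/|t−z|² + ∫_{−∞}^{b₀} dt/|t−z|² + ∑_j ∫_{x_j}^{b_j} dt/|t−z|²` holds. -/
theorem stmt15 (g : ℕ) (b0 a0 : ℝ) (a b x : Fin g → ℝ) (x0 : ℝ)
    (hb0a0 : b0 < a0) (hlow : ∀ j, b0 < a j) (hab : ∀ j, a j < b j)
    (hord : ∀ j k : Fin g, j < k → b j < a k) (hhigh : ∀ j, b j < a0)
    (hx : ∀ j, x j ∈ Set.Ioo (a j) (b j)) (hx0 : a0 < x0)
    (z : ℂ) (hz : 0 < z.im) :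
    (∃ r : ℝ, r < 0 ∧
      ((z - (a0 : ℂ)) * (z - (b0 : ℂ)) * ∏ j, (z - (a j : ℂ)) * (z - (b j : ℂ))) /
        ((z - (x0 : ℂ)) * ∏ j, (z - (x j : ℂ))) ^ 2 = (r : ℂ)) ↔
    ((∫ t in a0..x0, 1 / ‖(t : ℂ) - z‖ ^ 2) +
        ∑ j, ∫ t in (a j)..(x j), 1 / ‖(t : ℂ) - z‖ ^ 2)
      = ((∫ t in Set.Ioi x0, 1 / ‖(t : ℂ) - z‖ ^ 2) +
          (∫ t in Set.Iic b0, 1 / ‖(t : ℂ) - z‖ ^ 2) +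
          ∑ j, ∫ t in (x j)..(b j), 1 / ‖(t : ℂ) - z‖ ^ 2) := by
  have hy : z.im ≠ 0 := ne_of_gt hz
  set φ : ℝ → ℝ := fun t => Real.arctan ((t - z.re)/z.im) with hφ
  set rr : ℝ → ℝ := fun t => z.im * Real.sqrt (1 + ((t - z.re)/z.im)^2) with hrr
  have hrrpos : ∀ t, 0 < rr t := fun t => mul_pos hz (Real.sqrt_pos.2 (by positivity))
  have hφmono : ∀ {s t : ℝ}, s < t → φ s < φ t := by
    intro s t hst
    exact Real.arctan_strictMono (by gcongr)
  have hφlt : ∀ t, φ t < Real.pi/2 := fun t => Real.arctan_lt_pi_div_two _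
  have hφgt : ∀ t, -(Real.pi/2) < φ t := fun t => Real.neg_pi_div_two_lt_arctan _
  set SA := ∑ j, φ (a j) with hSA
  set SB := ∑ j, φ (b j) with hSB
  set SX := ∑ j, φ (x j) with hSX
  set D : ℝ := (φ a0 + φ b0 + SA + SB) - 2*φ x0 - 2*SX with hD
  -- telescoping bounds
  set Aa : ℕ → ℝ := fun j => if h : j < g then φ (a ⟨j, h⟩) else φ a0 with hAa
  set Xx : ℕ → ℝ := fun j => if h : j < g then φ (x ⟨j, h⟩) else φ x0 with hXx
  have hAa0 : -(Real.pi/2) < Aa 0 := by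
    by_cases h : 0 < g
    · simp only [hAa]; rw [dif_pos h]; exact hφgt _
    · simp only [hAa]; rw [dif_neg (by omega)]; exact hφgt _
  have hXx0 : φ b0 < Xx 0 := by
    by_cases h : 0 < g
    · simp only [hXx]; rw [dif_pos h]
      exact hφmono (lt_trans (hlow _) (hx ⟨0,h⟩).1)
    · simp only [hXx]; rw [dif_neg (by omega)]
      exact hφmono (lt_trans hb0a0 hx0)
  have htel1 : SX - SA ≤ φ a0 - Aa 0 := by
    have step : ∀ j : Fin g, φ (x j) - φ (a j) ≤ Aa (↑j + 1) - Aa ↑j := by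
      intro j
      have h1 : Aa ↑j = φ (a j) := by simp only [hAa]; rw [dif_pos j.isLt]
      have h2 : φ (x j) ≤ Aa (↑j + 1) := by
        by_cases h : ↑j + 1 < g
        · simp only [hAa]; rw [dif_pos h]
          exact le_of_lt (hφmono (lt_trans (hx j).2 (hord j ⟨↑j+1, h⟩ (by simp [Fin.lt_def]))))
        · simp only [hAa]; rw [dif_neg h]
          exact le_of_lt (hφmono (lt_trans (hx j).2 (hhigh j)))
      linarith
    have hAag : Aa g = φ a0 := by simp only [hAa]; rw [dif_neg (lt_irrefl g)]
    calc SX - SA = ∑ j : Fin g, (φ (x j) - φ (a j)) := by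
          rw [hSX, hSA, Finset.sum_sub_distrib]
      _ ≤ ∑ j : Fin g, (Aa (↑j + 1) - Aa ↑j) := Finset.sum_le_sum (fun j _ => step j)
      _ = ∑ i ∈ Finset.range g, (Aa (i + 1) - Aa i) := Fin.sum_univ_eq_sum_range (fun i => Aa (i+1) - Aa i) g
      _ = Aa g - Aa 0 := Finset.sum_range_sub Aa g
      _ = φ a0 - Aa 0 := by rw [hAag]
  have htel2 : SB - SX ≤ φ x0 - Xx 0 := by
    have step : ∀ j : Fin g, φ (b j) - φ (x j) ≤ Xx (↑j + 1) - Xx ↑j := by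
      intro j
      have h1 : Xx ↑j = φ (x j) := by simp only [hXx]; rw [dif_pos j.isLt]
      have h2 : φ (b j) ≤ Xx (↑j + 1) := by
        by_cases h : ↑j + 1 < g
        · simp only [hXx]; rw [dif_pos h]
          exact le_of_lt (hφmono (lt_trans (hord j ⟨↑j+1, h⟩ (by simp [Fin.lt_def])) (hx ⟨↑j+1,h⟩).1))
        · simp only [hXx]; rw [dif_neg h]
          exact le_of_lt (hφmono (lt_trans (hhigh j) hx0))
      linarith
    have hXxg : Xx g = φ x0 := by simp only [hXx]; rw [dif_neg (lt_irrefl g)]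
    calc SB - SX = ∑ j : Fin g, (φ (b j) - φ (x j)) := by
          rw [hSX, hSB, Finset.sum_sub_distrib]
      _ ≤ ∑ j : Fin g, (Xx (↑j + 1) - Xx ↑j) := Finset.sum_le_sum (fun j _ => step j)
      _ = ∑ i ∈ Finset.range g, (Xx (i + 1) - Xx i) := Fin.sum_univ_eq_sum_range (fun i => Xx (i+1) - Xx i) g
      _ = Xx g - Xx 0 := Finset.sum_range_sub Xx g
      _ = φ x0 - Xx 0 := by rw [hXxg]
  have hSXA : 0 ≤ SX - SA := by
    rw [hSX, hSA, ← Finset.sum_sub_distrib]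
    exact Finset.sum_nonneg fun j _ => le_of_lt (sub_pos.2 (hφmono (hx j).1))
  have hSBX : 0 ≤ SB - SX := by
    rw [hSX, hSB, ← Finset.sum_sub_distrib]
    exact Finset.sum_nonneg fun j _ => le_of_lt (sub_pos.2 (hφmono (hx j).2))
  have hDlt : D < 0 := by
    have := hφmono hx0
    have := hφlt x0
    have := hXx0
    simp only [hD]
    linarith
  have hDgt : -(2*Real.pi) < D := by
    have := hφgt x0
    have h1 := hφlt x0
    have := hφgt b0
    simp only [hD]
    linarith
  -- polar forms
  have hfac : ∀ t : ℝ, z - (t:ℂ) = ((rr t : ℝ):ℂ) *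
      Complex.exp ((↑(Real.pi/2 + φ t):ℂ) * Complex.I) := fun t => factor_polar z hz t
  set RT : ℝ := rr a0 * rr b0 * ∏ j, (rr (a j) * rr (b j)) with hRT
  set TT : ℝ := (Real.pi/2 + φ a0) + (Real.pi/2 + φ b0)
      + ∑ j, ((Real.pi/2 + φ (a j)) + (Real.pi/2 + φ (b j))) with hTT
  set RU : ℝ := rr x0 * ∏ j, rr (x j) with hRU
  set TU : ℝ := (Real.pi/2 + φ x0) + ∑ j, (Real.pi/2 + φ (x j)) with hTU
  have hT : (z - (a0:ℂ)) * (z - (b0:ℂ)) * ∏ j, (z - (a j:ℂ)) * (z - (b j:ℂ))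
      = ((RT : ℝ):ℂ) * Complex.exp ((↑TT:ℂ) * Complex.I) := by
    rw [hRT, hTT]
    simp only [hfac, polar_mul, polar_prod]
  have hU2 : ((z - (x0:ℂ)) * ∏ j, (z - (x j:ℂ)))^2
      = ((RU * RU : ℝ):ℂ) * Complex.exp ((↑(TU + TU):ℂ) * Complex.I) := by
    rw [sq, hRU, hTU]
    simp only [hfac, polar_mul, polar_prod]
  have hRTpos : 0 < RT := by
    rw [hRT]
    have : 0 < ∏ j, (rr (a j) * rr (b j)) :=
      Finset.prod_pos fun j _ => mul_pos (hrrpos _) (hrrpos _)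
    positivity
  have hRUpos : 0 < RU := by
    rw [hRU]
    have : 0 < ∏ j, rr (x j) := Finset.prod_pos fun j _ => hrrpos _
    positivity
  have hKpos : 0 < RT / (RU * RU) := div_pos hRTpos (mul_pos hRUpos hRUpos)
  have hDeq : TT - (TU + TU) = D := by
    have hs1 : ∑ j, ((Real.pi/2 + φ (a j)) + (Real.pi/2 + φ (b j)))
        = g*Real.pi + SA + SB := by
      rw [hSA, hSB]
      simp [Finset.sum_add_distrib, Finset.sum_const, Finset.card_univ, nsmul_eq_mul]
      try ring
    have hs2 : ∑ j, (Real.pi/2 + φ (x j)) = g*(Real.pi/2) + SX := by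
      rw [hSX]
      simp [Finset.sum_add_distrib, Finset.sum_const, Finset.card_univ, nsmul_eq_mul]
      try ring
    rw [hTT, hTU, hs1, hs2, hD]
    ring
  rw [hT, hU2, polar_div _ _ _ _ (ne_of_gt (mul_pos hRUpos hRUpos)),
    polar_neg_iff _ _ hKpos]
  -- integral side
  have hInt : ∀ p q : ℝ, (∫ t in p..q, 1 / ‖(t:ℂ) - z‖ ^ 2)
      = φ q / z.im - φ p / z.im := by
    intro p q
    simp only [hφ]
    exact integral_interval z hz p q
  have hIoi : (∫ t in Set.Ioi x0, 1 / ‖(t:ℂ) - z‖ ^ 2)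
      = (Real.pi/2) / z.im - φ x0 / z.im := by
    simp only [hφ]
    exact integral_Ioi' z hz x0
  have hIic : (∫ t in Set.Iic b0, 1 / ‖(t:ℂ) - z‖ ^ 2)
      = φ b0 / z.im + (Real.pi/2) / z.im := by
    simp only [hφ]
    exact integral_Iic' z hz b0
  rw [hIoi, hIic]
  simp only [hInt]
  rw [Finset.sum_sub_distrib, Finset.sum_sub_distrib, ← Finset.sum_div, ← Finset.sum_div,
    ← Finset.sum_div, ← hSA, ← hSB, ← hSX]
  simp only [div_eq_mul_inv, ← sub_mul, ← add_mul]
  clear hT hU2 hfac hInt hIoi hIic hrrpos hφmono hφlt hφgt hAa0 hXx0 htel1 htel2 hSXA hSBX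
  clear_value φ rr SA SB SX D Aa Xx RT TT RU TU
  rw [mul_left_inj' (inv_ne_zero hy)]
  have hπ := Real.pi_pos
  constructor
  · rintro ⟨n, hn⟩
    rw [hDeq] at hn
    have hn1 : (-1 : ℝ) < (n:ℝ) := by nlinarith
    have hn2 : ((n:ℝ)) < 1 := by nlinarith
    have hn0 : n = 0 := by
      have h1 : (-1 : ℤ) < n := by exact_mod_cast hn1
      have h2 : n < 1 := by exact_mod_cast hn2
      omega
    rw [hn0] at hn
    push_cast at hn
    have hDpi : D = -Real.pi := by linarith
    rw [hD] at hDpi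
    linarith
  · intro heq
    refine ⟨0, ?_⟩
    rw [hDeq, hD]
    push_cast
    linarith
end

section
/- Let z₀ ∈ ℂ with Im z₀ > 0. (i) For x₀ ∈ ℝ, the number (x₀ − z₀)²/z₀ is a nonnegative real number if and only if x₀ = −|z₀|; in particular the Abel–Jacobi-type system for the domain ℂ∖[0,∞) has the unique solution x₀ = −|z₀|. (ii) If λ is the (unique) complex number with Re λ > 0 and z₀ = −λ², then (1/(2·Im z₀)) · |(λ − |λ|)/(λ + |λ|)| = 1 / ((λ + conj(λ))·(√λ + conj(√λ))²), where √ is the principal branch of the square root. -/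
open Complex ComplexConjugate

noncomputable def csqrt (z : ℂ) : ℂ := z ^ ((1 : ℂ)/2)

/-- Explicit solution of the Abel–Jacobi-type system for `D = ℂ ∖ [0,∞)`:
(i) for `x₀ ∈ ℝ`, `(x₀−z₀)²/z₀` is a nonnegative real number iff `x₀ = −|z₀|`;
(ii) if `Re λ > 0` and `z₀ = −λ²`, then
`(1/(2·Im z₀))·|(λ−|λ|)/(λ+|λ|)| = 1/((λ+conj λ)·(√λ+conj √λ)²)`. -/
theorem stmt17 (z₀ : ℂ) (hz₀ : 0 < z₀.im) :
    (∀ x₀ : ℝ, (∃ r : ℝ, 0 ≤ r ∧ ((x₀ : ℂ) - z₀) ^ 2 / z₀ = (r : ℂ)) ↔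
      x₀ = -‖z₀‖) ∧
    (∀ l : ℂ, 0 < l.re → z₀ = -l ^ 2 →
      ((1 / (2 * z₀.im) *
          ‖(l - (‖l‖ : ℂ)) / (l + (‖l‖ : ℂ))‖ : ℝ) : ℂ)
        = 1 / ((l + conj l) * (csqrt l + conj (csqrt l)) ^ 2)) := by
  have hz : z₀ ≠ 0 := fun h => by simp [h] at hz₀
  have hb : z₀.im ≠ 0 := ne_of_gt hz₀
  have hm : ‖z₀‖^2 = z₀.re^2 + z₀.im^2 := by
    rw [Complex.sq_norm, Complex.normSq_apply]; ring
  have hmpos : 0 < ‖z₀‖ := norm_pos_iff.mpr hz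
  constructor
  · intro x₀
    constructor
    · rintro ⟨r, hr, hEq⟩
      have h2 : ((x₀:ℂ) - z₀)^2 = r * z₀ := by
        field_simp at hEq; linear_combination hEq
      have hre := congrArg Complex.re h2
      have him := congrArg Complex.im h2
      simp [Complex.mul_re, Complex.mul_im, sq] at hre him
      have h3 : (2*(z₀.re - x₀)) * z₀.im = r * z₀.im := by linear_combination him
      have hrval : r = 2*(z₀.re - x₀) := (mul_right_cancel₀ hb h3).symm
      have hx2 : (x₀ - ‖z₀‖) * (x₀ + ‖z₀‖) = 0 := by
        linear_combination hre - hm + z₀.re * hrval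
      rcases mul_eq_zero.mp hx2 with h | h
      · exfalso
        have hax : x₀ = ‖z₀‖ := by linarith
        have hle : |z₀.re| ≤ ‖z₀‖ := Complex.abs_re_le_norm z₀
        have hle' := abs_le.mp hle
        nlinarith [hz₀, hr, hrval]
      · linarith
    · intro hx
      refine ⟨2*(z₀.re + ‖z₀‖), by nlinarith [neg_abs_le z₀.re, abs_le.mp (Complex.abs_re_le_norm z₀)], ?_⟩
      rw [div_eq_iff hz]
      subst hx
      apply Complex.ext
      · simp [Complex.mul_re, Complex.mul_im, sq]; push_cast; nlinarith [hm]
      · simp [Complex.mul_re, Complex.mul_im, sq]; push_cast; ring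
  · intro l hl hz0
    have hw2 : (csqrt l)^2 = l := by
      have := Complex.cpow_nat_inv_pow l (n := 2) two_ne_zero
      simpa [csqrt, one_div] using this
    set u := (csqrt l).re with hu
    set v := (csqrt l).im with hv
    set a := l.re with ha
    set bb := l.im with hbb
    set m := ‖l‖ with hmdef
    have hm2 : m^2 = a^2 + bb^2 := by rw [hmdef, Complex.sq_norm, Complex.normSq_apply]; ring
    have hzim : z₀.im = -(2*a*bb) := by
      rw [hz0]; simp [Complex.mul_im, sq]; ring
    have hbneg : bb < 0 := by nlinarith [hz₀]
    have hl0 : l ≠ 0 := fun h => by rw [ha, h] at hl; simp at hl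
    have hmp : 0 < m := norm_pos_iff.mpr hl0
    have hma : a < m := by nlinarith
    have h1 : u^2 - v^2 = a := by
      have := congrArg Complex.re hw2
      simpa [Complex.mul_re, sq] using this
    have habs : u^2 + v^2 = m := by
      have h := Complex.sq_norm (csqrt l)
      rw [Complex.normSq_apply] at h
      calc u^2+v^2 = ‖csqrt l‖^2 := by rw [h]; ring
        _ = ‖(csqrt l)^2‖ := by rw [norm_pow]
        _ = m := by rw [hw2]
    have hu2 : u^2 = (m+a)/2 := by linarith
    have hune : u ≠ 0 := by
      intro h; rw [h] at hu2; simp at hu2; nlinarith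
    -- rewrite RHS
    rw [Complex.add_conj, Complex.add_conj]
    rw [show ((2*l.re : ℝ):ℂ) * ((2*(csqrt l).re : ℝ):ℂ)^2
        = ((2*a*(2*u)^2 : ℝ) : ℂ) by push_cast; ring]
    rw [← Complex.ofReal_one, ← Complex.ofReal_div, Complex.ofReal_inj]
    -- real goal
    set A := ‖l - (m:ℂ)‖ with hA
    set B := ‖l + (m:ℂ)‖ with hB
    have hA2 : A^2 = (a-m)^2 + bb^2 := by
      rw [hA, Complex.sq_norm, Complex.normSq_apply]
      simp [ha, hbb]; ring
    have hB2 : B^2 = (a+m)^2 + bb^2 := by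
      rw [hB, Complex.sq_norm, Complex.normSq_apply]
      simp [ha, hbb]; ring
    have hBpos : 0 < B := by
      rw [hB]; apply norm_pos_iff.mpr
      intro h
      have := congrArg Complex.im h
      simp [hbb] at this
      exact absurd this (ne_of_lt hbneg)
    have hAnn : 0 ≤ A := norm_nonneg _
    have hsq : (A * (m+a))^2 = ((-bb) * B)^2 := by
      linear_combination (m+a)^2 * hA2 - bb^2 * hB2 + (m^2 - a^2 + bb^2) * hm2
    have key : A * (m+a) = (-bb) * B := by
      have hn1 : 0 ≤ A * (m+a) := mul_nonneg hAnn (by linarith)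
      have hn2 : 0 ≤ (-bb) * B := mul_nonneg (by linarith) hBpos.le
      calc A*(m+a) = Real.sqrt ((A*(m+a))^2) := (Real.sqrt_sq hn1).symm
        _ = Real.sqrt (((-bb)*B)^2) := by rw [hsq]
        _ = (-bb)*B := Real.sqrt_sq hn2
    rw [norm_div]
    rw [hzim]
    have h2u : (2*u)^2 = 2*(m+a) := by linear_combination 4*hu2
    rw [h2u]
    have hane : a ≠ 0 := ne_of_gt hl
    have hmane : m + a ≠ 0 := by positivity
    have hbne : bb ≠ 0 := ne_of_lt hbneg
    have hBne : ‖l + (m:ℂ)‖ ≠ 0 := hBpos.ne'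
    field_simp
    rw [← hA, ← hB]
    linear_combination (-1) * key
end
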